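/- arXiv:2602.15708 — 6 statements merged into one kernel-verified Lean document; each statement's English description precedes it below -/
import Mathlib

section
/- For any nonempty domain D ⊆ L(C) over m ≥ 2 candidates, 0 ≤ ansd(D) ≤ 1/2, and ansd(D) = 0 if and only if D = L(C). -/
/-- Rankings over `m` candidates are permutations of `Fin m` (candidate ↦ position,
smaller position = ranked higher). `swapDist u v` counts pairs of candidates
on whose relative order `u` and `v` disagree. -/
def swapDist {m : ℕ} (u v : Equiv.Perm (Fin m)) : ℕ :=
  ((Finset.univ : Finset (Fin m × Fin m)).filter
    (fun p => u p.1 < u p.2 ∧ v p.2 < v p.1)).card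

/-- The reverse of a ranking. -/
def revRank {m : ℕ} (v : Equiv.Perm (Fin m)) : Equiv.Perm (Fin m) :=
  v.trans Fin.revPerm

/-- Swap distance from a domain `D` to a ranking `u`. -/
noncomputable def domDist {m : ℕ} (D : Finset (Equiv.Perm (Fin m))) (u : Equiv.Perm (Fin m)) : ℕ :=
  sInf ((fun w => swapDist w u) '' (D : Set (Equiv.Perm (Fin m))))

/-- Average normalized swap distance of a domain. -/
noncomputable def ansd {m : ℕ} (D : Finset (Equiv.Perm (Fin m))) : ℚ :=
  ((∑ u : Equiv.Perm (Fin m), (domDist D u : ℚ)) / (Nat.factorial m)) / (m.choose 2)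

/-- Outer diversity of a domain. -/
noncomputable def outDiv {m : ℕ} (D : Finset (Equiv.Perm (Fin m))) : ℚ :=
  1 - 2 * ansd D

lemma swapDist_self {m : ℕ} (u : Equiv.Perm (Fin m)) : swapDist u u = 0 := by
  simp only [swapDist, Finset.card_eq_zero, Finset.filter_eq_empty_iff]
  rintro p - ⟨h1, h2⟩
  exact absurd (h1.trans h2) (lt_irrefl _)

lemma swapDist_eq_zero {m : ℕ} {w u : Equiv.Perm (Fin m)} (h : swapDist w u = 0) : w = u := by
  rw [swapDist, Finset.card_eq_zero, Finset.filter_eq_empty_iff] at h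
  have key : ∀ x y : Fin m, w x < w y → u x < u y := by
    intro x y hxy
    have := h (Finset.mem_univ (x, y))
    simp only [not_and, not_lt] at this
    have hle := this hxy
    rcases lt_or_eq_of_le hle with h' | h'
    · exact h'
    · exact absurd (u.injective h') (by rintro rfl; exact lt_irrefl _ hxy)
  have hsm : StrictMono (fun a => u (w.symm a)) := by
    intro a b hab
    exact key _ _ (by simpa using hab)
  have hrange : Set.range (fun a => u (w.symm a)) = Set.range (id : Fin m → Fin m) := by
    rw [Set.range_id]
    exact (u.surjective.comp w.symm.surjective).range_eq
  have hid : (fun a : Fin m => u (w.symm a)) = id :=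
    (hsm.range_inj strictMono_id).1 hrange
  refine Equiv.ext fun x => ?_
  have := congrFun hid (w x)
  simpa using this.symm

lemma sum_id_choose (n : ℕ) : ∑ i ∈ Finset.range n, i = n.choose 2 := by
  induction n with
  | zero => simp
  | succ k ih => rw [Finset.sum_range_succ, ih, Nat.choose]; simp [Nat.choose_one_right, Nat.add_comm]

lemma pairs_card {m : ℕ} (w : Equiv.Perm (Fin m)) :
    ((Finset.univ : Finset (Fin m × Fin m)).filter (fun p => w p.1 < w p.2)).card = m.choose 2 := by
  have h1 : ((Finset.univ : Finset (Fin m × Fin m)).filter (fun p => w p.1 < w p.2)).card =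
      ((Finset.univ : Finset (Fin m × Fin m)).filter (fun p => p.1 < p.2)).card := by
    apply Finset.card_bij (fun p _ => (w p.1, w p.2))
    · intro p hp
      simp only [Finset.mem_filter, Finset.mem_univ, true_and] at hp ⊢
      exact hp
    · intro p hp q hq hpq
      simp only [Prod.mk.injEq] at hpq
      exact Prod.ext (w.injective hpq.1) (w.injective hpq.2)
    · intro q hq
      simp only [Finset.mem_filter, Finset.mem_univ, true_and] at hq
      exact ⟨(w.symm q.1, w.symm q.2), by simpa using hq, by simp⟩
  have h2 : ((Finset.univ : Finset (Fin m × Fin m)).filter (fun p => p.1 < p.2)).card =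
      ∑ b : Fin m, (Finset.Iio b).card := by
    rw [Finset.card_filter, ← Finset.univ_product_univ, Finset.sum_product_right]
    congr 1; ext b
    rw [show Finset.Iio b = Finset.univ.filter (fun x : Fin m => x < b) by ext x; simp,
      Finset.card_filter]
  rw [h1, h2]
  simp only [Fin.card_Iio]
  rw [Fin.sum_univ_eq_sum_range (fun i => i) m, sum_id_choose]

lemma swapDist_add_rev {m : ℕ} (w u : Equiv.Perm (Fin m)) :
    swapDist w u + swapDist w (revRank u) = m.choose 2 := by
  classical
  set S := (Finset.univ : Finset (Fin m × Fin m)).filter (fun p => w p.1 < w p.2) with hS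
  have e1 : swapDist w u = (S.filter (fun p => u p.2 < u p.1)).card := by
    rw [swapDist, Finset.filter_filter]
  have e2 : swapDist w (revRank u) = (S.filter (fun p => ¬ u p.2 < u p.1)).card := by
    rw [swapDist, Finset.filter_filter]
    congr 1
    apply Finset.filter_congr
    intro p hp
    simp only [Finset.mem_univ, revRank, Equiv.trans_apply, Fin.revPerm_apply, Fin.rev_lt_rev,
      true_and] at *
    constructor
    · rintro ⟨hw, hu⟩
      refine ⟨hw, not_lt.2 hu.le⟩
    · rintro ⟨hw, hu⟩
      refine ⟨hw, lt_of_le_of_ne (not_lt.1 hu) ?_⟩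
      intro he
      have h12 := u.injective he
      rw [h12] at hw
      exact lt_irrefl _ hw
  rw [e1, e2, Finset.card_filter_add_card_filter_not]
  exact pairs_card w

lemma revRank_revRank {m : ℕ} (u : Equiv.Perm (Fin m)) : revRank (revRank u) = u := by
  refine Equiv.ext fun x => ?_
  simp [revRank, Fin.rev_rev]

lemma domDist_le {m : ℕ} {D : Finset (Equiv.Perm (Fin m))} {w : Equiv.Perm (Fin m)}
    (hw : w ∈ D) (u : Equiv.Perm (Fin m)) : domDist D u ≤ swapDist w u :=
  Nat.sInf_le ⟨w, by simpa using hw, rfl⟩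

lemma domDist_eq_zero_iff {m : ℕ} {D : Finset (Equiv.Perm (Fin m))} (hD : D.Nonempty)
    (u : Equiv.Perm (Fin m)) : domDist D u = 0 ↔ u ∈ D := by
  constructor
  · intro h
    rw [domDist, Nat.sInf_eq_zero] at h
    rcases h with h | h
    · rcases h with ⟨w, hw, hw0⟩
      have := swapDist_eq_zero hw0
      subst this; exact hw
    · exfalso
      rcases hD with ⟨w, hw⟩
      exact absurd h (Set.nonempty_iff_ne_empty.1 ⟨swapDist w u, ⟨w, by simpa using hw, rfl⟩⟩)
  · intro h
    exact Nat.le_zero.1 ((domDist_le h u).trans (le_of_eq (swapDist_self u)))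

theorem stmt3 (m : ℕ) (hm : 2 ≤ m) (D : Finset (Equiv.Perm (Fin m))) (hD : D.Nonempty) :
    0 ≤ ansd D ∧ ansd D ≤ 1 / 2 ∧ (ansd D = 0 ↔ D = Finset.univ) := by
  have hN : (0:ℚ) < (m.factorial : ℚ) := by positivity
  have hCpos : 0 < m.choose 2 := Nat.choose_pos hm
  have hC : (0:ℚ) < (m.choose 2 : ℚ) := by exact_mod_cast hCpos
  obtain ⟨w, hw⟩ := hD
  -- key sum bound
  have hsum_le : 2 * ∑ u : Equiv.Perm (Fin m), domDist D u ≤ m.factorial * m.choose 2 := by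
    have hrev : ∑ u : Equiv.Perm (Fin m), domDist D (revRank u)
        = ∑ u : Equiv.Perm (Fin m), domDist D u := by
      have h := Equiv.sum_comp (Function.Involutive.toPerm revRank revRank_revRank) (domDist D)
      exact h
    calc 2 * ∑ u : Equiv.Perm (Fin m), domDist D u
        = ∑ u : Equiv.Perm (Fin m), (domDist D u + domDist D (revRank u)) := by
          rw [Finset.sum_add_distrib, hrev]; ring
      _ ≤ ∑ u : Equiv.Perm (Fin m), (swapDist w u + swapDist w (revRank u)) := by
          apply Finset.sum_le_sum
          intro u _
          exact Nat.add_le_add (domDist_le hw u) (domDist_le hw (revRank u))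
      _ = ∑ u : Equiv.Perm (Fin m), m.choose 2 := by
          apply Finset.sum_congr rfl
          intro u _
          exact swapDist_add_rev w u
      _ = m.factorial * m.choose 2 := by
          rw [Finset.sum_const, smul_eq_mul, Finset.card_univ, Fintype.card_perm,
            Fintype.card_fin]
  have hcast : (∑ u : Equiv.Perm (Fin m), (domDist D u : ℚ))
      = ((∑ u : Equiv.Perm (Fin m), domDist D u : ℕ) : ℚ) := by push_cast; rfl
  refine ⟨?_, ?_, ?_⟩
  · unfold ansd; positivity
  · rw [ansd, div_div, hcast, div_le_div_iff₀ (by positivity) (by norm_num)]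
    have := hsum_le
    have h2 : ((2 * ∑ u : Equiv.Perm (Fin m), domDist D u : ℕ) : ℚ)
        ≤ ((m.factorial * m.choose 2 : ℕ) : ℚ) := by exact_mod_cast hsum_le
    push_cast at h2 ⊢
    linarith
  · rw [ansd, div_div, hcast, div_eq_zero_iff]
    have hne : ((m.factorial : ℚ) * (m.choose 2 : ℚ)) ≠ 0 := by positivity
    rw [or_iff_left hne, Nat.cast_eq_zero, Finset.sum_eq_zero_iff]
    rw [Finset.eq_univ_iff_forall]
    constructor
    · intro h u
      exact (domDist_eq_zero_iff ⟨w, hw⟩ u).1 (h u (Finset.mem_univ u))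
    · intro h u _
      exact (domDist_eq_zero_iff ⟨w, hw⟩ u).2 (h u)
end

section
/- Let m be even and let GS/cat be the group-separable caterpillar domain over candidates c_1,…,c_m, i.e., the set of rankings v such that reading candidates along v, their indices first strictly increase up to c_m and then strictly decrease. Then ansd(GS/cat) ≤ (1/4)·(m−2)/(m−1), and consequently out-div(GS/cat) ≥ 1 − (1/2)·(m−2)/(m−1) > 1/2. -/
/-- A ranking belongs to the caterpillar group-separable domain iff the sequence of
candidate indices read from top to bottom is first strictly increasing and then
strictly decreasing (`v.symm p` is the candidate at position `p`). -/
def unimodalPerm {m : ℕ} (v : Equiv.Perm (Fin m)) : Prop :=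
  ∃ t : Fin m, (∀ p q : Fin m, p < q → q ≤ t → v.symm p < v.symm q) ∧
    (∀ p q : Fin m, t ≤ p → p < q → v.symm q < v.symm p)

/-- The caterpillar group-separable domain over `m` candidates. -/
noncomputable def gsCat (m : ℕ) : Finset (Equiv.Perm (Fin m)) :=
  @Finset.filter _ (fun v => unimodalPerm v) (Classical.decPred _) Finset.univ

namespace GS

variable {m : ℕ}

def key (k : ℕ) (u : Equiv.Perm (Fin m)) (a : Fin m) : ℕ :=
  if (u a).val < k then a.val else 2 * m - a.val

lemma key_inj (k : ℕ) (u : Equiv.Perm (Fin m)) : Function.Injective (key k u) := by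
  intro a b hab
  have ha := a.isLt
  have hb := b.isLt
  unfold key at hab
  apply Fin.ext
  split_ifs at hab <;> omega

def rank (k : ℕ) (u : Equiv.Perm (Fin m)) (a : Fin m) : ℕ :=
  (Finset.univ.filter fun b => key k u b < key k u a).card

lemma rank_lt (k : ℕ) (u : Equiv.Perm (Fin m)) (a : Fin m) : rank k u a < m := by
  have hsub : (Finset.univ.filter fun b => key k u b < key k u a) ⊆ Finset.univ.erase a := by
    intro b hb
    rw [Finset.mem_filter] at hb
    refine Finset.mem_erase.mpr ⟨fun h => ?_, Finset.mem_univ b⟩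
    subst h; exact lt_irrefl _ hb.2
  have h1 := Finset.card_le_card hsub
  have h2 : (Finset.univ.erase a).card < (Finset.univ : Finset (Fin m)).card :=
    Finset.card_erase_lt_of_mem (Finset.mem_univ a)
  have h3 : (Finset.univ : Finset (Fin m)).card = m := by simp
  unfold rank; omega

lemma rank_lt_rank {k : ℕ} {u : Equiv.Perm (Fin m)} {a b : Fin m}
    (h : key k u a < key k u b) : rank k u a < rank k u b := by
  apply Finset.card_lt_card
  rw [Finset.ssubset_iff_of_subset]
  · exact ⟨a, Finset.mem_filter.mpr ⟨Finset.mem_univ _, h⟩,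
      fun hmem => lt_irrefl _ (Finset.mem_filter.mp hmem).2⟩
  · intro c hc
    rw [Finset.mem_filter] at hc ⊢
    exact ⟨hc.1, lt_trans hc.2 h⟩

noncomputable def W (k : ℕ) (u : Equiv.Perm (Fin m)) : Equiv.Perm (Fin m) :=
  Equiv.ofBijective (fun a => (⟨rank k u a, rank_lt k u a⟩ : Fin m))
    (Finite.injective_iff_bijective.mp (by
      intro a b hab
      by_contra hne
      have hkne : key k u a ≠ key k u b := fun h => hne (key_inj k u h)
      have hr : rank k u a = rank k u b := by
        have := congrArg Fin.val hab; simpa using this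
      rcases hkne.lt_or_gt with h | h
      · exact absurd hr (Nat.ne_of_lt (rank_lt_rank h))
      · exact absurd hr.symm (Nat.ne_of_lt (rank_lt_rank h))))

lemma W_val (k : ℕ) (u : Equiv.Perm (Fin m)) (a : Fin m) : (W k u a).val = rank k u a := rfl

lemma W_lt_iff (k : ℕ) (u : Equiv.Perm (Fin m)) (a b : Fin m) :
    W k u a < W k u b ↔ key k u a < key k u b := by
  rw [Fin.lt_def, W_val, W_val]
  constructor
  · intro h
    by_contra hle
    push_neg at hle
    rcases eq_or_lt_of_le hle with heq | hlt
    · have : b = a := key_inj k u heq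
      subst this; exact lt_irrefl _ h
    · have h2 := rank_lt_rank hlt
      omega
  · exact fun h => rank_lt_rank h

lemma key_last (hm : 2 ≤ m) (k : ℕ) (u : Equiv.Perm (Fin m)) :
    key k u ⟨m - 1, by omega⟩ = m - 1 ∨ key k u ⟨m - 1, by omega⟩ = 2 * m - (m - 1) := by
  unfold key
  split_ifs with h
  · left; rfl
  · right; rfl

lemma key_inc (hm : 2 ≤ m) (k : ℕ) (u : Equiv.Perm (Fin m)) {a b : Fin m} (hab : a ≠ b)
    (h1 : key k u a < key k u b)
    (h2 : key k u b ≤ key k u ⟨m - 1, by omega⟩) : a < b := by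
  have ha := a.isLt
  have hb := b.isLt
  have hab' : a.val ≠ b.val := fun h => hab (Fin.ext h)
  rw [Fin.lt_def]
  rcases key_last hm k u with hl | hl <;>
    (rw [hl] at h2; unfold key at h1 h2; split_ifs at h1 h2 <;> omega)

lemma key_dec (hm : 2 ≤ m) (k : ℕ) (u : Equiv.Perm (Fin m)) {a b : Fin m} (hab : a ≠ b)
    (h2 : key k u ⟨m - 1, by omega⟩ ≤ key k u a)
    (h1 : key k u a < key k u b) : b < a := by
  have ha := a.isLt
  have hb := b.isLt
  have hab' : a.val ≠ b.val := fun h => hab (Fin.ext h)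
  rw [Fin.lt_def]
  rcases key_last hm k u with hl | hl <;>
    (rw [hl] at h2; unfold key at h1 h2; split_ifs at h1 h2 <;> omega)

lemma W_unimodal (hm : 2 ≤ m) (k : ℕ) (u : Equiv.Perm (Fin m)) : unimodalPerm (W k u) := by
  refine ⟨W k u ⟨m - 1, by omega⟩, ?_, ?_⟩
  · intro p q hpq hqt
    set a := (W k u).symm p with hadef
    set b := (W k u).symm q with hbdef
    have hp : W k u a = p := Equiv.apply_symm_apply _ _
    have hq : W k u b = q := Equiv.apply_symm_apply _ _
    have hab : a ≠ b := fun h => hpq.ne ((W k u).symm.injective h)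
    have h1 : key k u a < key k u b := (W_lt_iff k u a b).mp (by rw [hp, hq]; exact hpq)
    have h2 : key k u b ≤ key k u ⟨m - 1, by omega⟩ := by
      by_contra hlt
      push_neg at hlt
      have := (W_lt_iff k u _ b).mpr hlt
      rw [hq] at this
      exact absurd this (not_lt.mpr hqt)
    exact key_inc hm k u hab h1 h2
  · intro p q hpt hpq
    set a := (W k u).symm p with hadef
    set b := (W k u).symm q with hbdef
    have hp : W k u a = p := Equiv.apply_symm_apply _ _
    have hq : W k u b = q := Equiv.apply_symm_apply _ _
    have hab : a ≠ b := fun h => hpq.ne ((W k u).symm.injective h)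
    have h1 : key k u a < key k u b := (W_lt_iff k u a b).mp (by rw [hp, hq]; exact hpq)
    have h2 : key k u ⟨m - 1, by omega⟩ ≤ key k u a := by
      by_contra hlt
      push_neg at hlt
      have := (W_lt_iff k u a _).mpr hlt
      rw [hp] at this
      exact absurd this (not_lt.mpr hpt)
    exact key_dec hm k u hab h2 h1

def Sset (k : ℕ) (u : Equiv.Perm (Fin m)) : Finset (Fin m × Fin m) :=
  Finset.univ.filter (fun p =>
    (p.1.val < p.2.val ∧ (u p.1).val < k ∧ (u p.2).val < k ∧ (u p.2).val < (u p.1).val) ∨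
    (p.2.val < p.1.val ∧ k ≤ (u p.1).val ∧ k ≤ (u p.2).val ∧ (u p.2).val < (u p.1).val))

lemma swapDist_W_le (k : ℕ) (u : Equiv.Perm (Fin m)) :
    swapDist (W k u) u ≤ (Sset k u).card := by
  apply Finset.card_le_card
  intro p hp
  rw [Finset.mem_filter] at hp
  obtain ⟨-, h1, h2⟩ := hp
  rw [W_lt_iff] at h1
  rw [Fin.lt_def] at h2
  rw [Sset, Finset.mem_filter]
  refine ⟨Finset.mem_univ _, ?_⟩
  have i1 := p.1.isLt
  have i2 := p.2.isLt
  unfold key at h1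
  split_ifs at h1 <;> omega

lemma W_mem_gsCat (hm : 2 ≤ m) (k : ℕ) (u : Equiv.Perm (Fin m)) : W k u ∈ gsCat m := by
  unfold gsCat
  exact (@Finset.mem_filter _ _ (Classical.decPred _) _ _).mpr
    ⟨Finset.mem_univ _, W_unimodal hm k u⟩

lemma domDist_le (hm : 2 ≤ m) (k : ℕ) (u : Equiv.Perm (Fin m)) :
    domDist (gsCat m) u ≤ (Sset k u).card := by
  have hmem : swapDist (W k u) u ∈ (fun w => swapDist w u) '' ((gsCat m : Finset _) : Set _) :=
    ⟨W k u, Finset.mem_coe.mpr (W_mem_gsCat hm k u), rfl⟩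
  exact le_trans (Nat.sInf_le hmem) (swapDist_W_le k u)

def ltP (A : Finset (Fin m)) : Finset (Fin m × Fin m) :=
  Finset.univ.filter (fun p => p.1 ∈ A ∧ p.2 ∈ A ∧ p.1.val < p.2.val)

def gtP (A : Finset (Fin m)) : Finset (Fin m × Fin m) :=
  Finset.univ.filter (fun p => p.1 ∈ A ∧ p.2 ∈ A ∧ p.2.val < p.1.val)

lemma ltP_card_eq_gtP_card (A : Finset (Fin m)) : (ltP A).card = (gtP A).card := by
  apply Finset.card_nbij' Prod.swap Prod.swap
  · intro p hp
    rw [ltP, Finset.mem_coe, Finset.mem_filter] at hp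
    rw [gtP, Finset.mem_coe, Finset.mem_filter]
    exact ⟨Finset.mem_univ _, hp.2.2.1, hp.2.1, hp.2.2.2⟩
  · intro p hp
    rw [gtP, Finset.mem_coe, Finset.mem_filter] at hp
    rw [ltP, Finset.mem_coe, Finset.mem_filter]
    exact ⟨Finset.mem_univ _, hp.2.2.1, hp.2.1, hp.2.2.2⟩
  · intro p _; rfl
  · intro p _; rfl

lemma ltP_disj_gtP (A : Finset (Fin m)) : Disjoint (ltP A) (gtP A) := by
  rw [Finset.disjoint_left]
  intro p hp hq
  rw [ltP, Finset.mem_filter] at hp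
  rw [gtP, Finset.mem_filter] at hq
  omega

lemma ltP_union_gtP (A : Finset (Fin m)) : ltP A ∪ gtP A = A.offDiag := by
  ext p
  rw [Finset.mem_union, ltP, gtP, Finset.mem_filter, Finset.mem_filter, Finset.mem_offDiag]
  constructor
  · rintro (⟨-, h1, h2, h3⟩ | ⟨-, h1, h2, h3⟩) <;>
      exact ⟨h1, h2, fun h => by rw [h] at h3; omega⟩
  · rintro ⟨h1, h2, h3⟩
    have : p.1.val ≠ p.2.val := fun h => h3 (Fin.ext h)
    rcases Nat.lt_or_ge p.1.val p.2.val with h | h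
    · exact Or.inl ⟨Finset.mem_univ _, h1, h2, h⟩
    · exact Or.inr ⟨Finset.mem_univ _, h1, h2, by omega⟩

lemma two_mul_ltP (A : Finset (Fin m)) : 2 * (ltP A).card = A.card * A.card - A.card := by
  have h := Finset.card_union_of_disjoint (ltP_disj_gtP A)
  rw [ltP_union_gtP, Finset.offDiag_card] at h
  rw [← ltP_card_eq_gtP_card] at h
  omega

lemma two_mul_gtP (A : Finset (Fin m)) : 2 * (gtP A).card = A.card * A.card - A.card := by
  rw [← ltP_card_eq_gtP_card]; exact two_mul_ltP A

lemma card_top (hm : 2 ≤ m) (k : ℕ) (hk : m = 2 * k) (u : Equiv.Perm (Fin m)) :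
    (Finset.univ.filter (fun a => (u a).val < k)).card = k := by
  have himg : (Finset.univ.filter (fun a => (u a).val < k)).image u
      = Finset.univ.filter (fun p : Fin m => p.val < k) := by
    ext p
    rw [Finset.mem_image, Finset.mem_filter]
    constructor
    · rintro ⟨a, ha, rfl⟩
      exact ⟨Finset.mem_univ _, (Finset.mem_filter.mp ha).2⟩
    · intro h
      exact ⟨u.symm p, Finset.mem_filter.mpr ⟨Finset.mem_univ _, by simp [h.2]⟩, by simp⟩
  have h1 := Finset.card_image_of_injective
    (Finset.univ.filter (fun a => (u a).val < k)) u.injective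
  have h2 : Finset.univ.filter (fun p : Fin m => p.val < k) = Finset.Iio (⟨k, by omega⟩ : Fin m) := by
    ext p
    rw [Finset.mem_filter, Finset.mem_Iio]
    exact ⟨fun h => h.2, fun h => ⟨Finset.mem_univ _, h⟩⟩
  rw [← h1, himg, h2, Fin.card_Iio]

lemma card_bottom (hm : 2 ≤ m) (k : ℕ) (hk : m = 2 * k) (u : Equiv.Perm (Fin m)) :
    (Finset.univ.filter (fun a => k ≤ (u a).val)).card = k := by
  have hneg : (Finset.univ.filter (fun a => k ≤ (u a).val))
      = Finset.univ.filter (fun a => ¬ (u a).val < k) := by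
    ext a; simp only [Finset.mem_filter, Finset.mem_univ, true_and, not_lt]
  have h := Finset.card_filter_add_card_filter_not
    (s := (Finset.univ : Finset (Fin m))) (p := fun a => (u a).val < k)
  rw [Finset.card_univ, Fintype.card_fin] at h
  rw [hneg]
  have h2 := card_top hm k hk u
  omega

def piFun (hm : 2 ≤ m) (k : ℕ) (hk : m = 2 * k) (p : Fin m) : Fin m :=
  if h : p.val < k then ⟨k - 1 - p.val, by omega⟩
  else ⟨m + k - 1 - p.val, by have := p.isLt; omega⟩

lemma piFun_val (hm : 2 ≤ m) (k : ℕ) (hk : m = 2 * k) (p : Fin m) :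
    (piFun hm k hk p).val = if p.val < k then k - 1 - p.val else m + k - 1 - p.val := by
  unfold piFun
  split_ifs <;> rfl

lemma piFun_inv (hm : 2 ≤ m) (k : ℕ) (hk : m = 2 * k) :
    Function.Involutive (piFun hm k hk) := by
  intro p
  have hp := p.isLt
  apply Fin.ext
  rw [piFun_val, piFun_val]
  split_ifs <;> omega

def piPerm (hm : 2 ≤ m) (k : ℕ) (hk : m = 2 * k) : Equiv.Perm (Fin m) :=
  (piFun_inv hm k hk).toPerm

lemma piPerm_val (hm : 2 ≤ m) (k : ℕ) (hk : m = 2 * k) (p : Fin m) :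
    (piPerm hm k hk p).val = if p.val < k then k - 1 - p.val else m + k - 1 - p.val :=
  piFun_val hm k hk p

lemma card_S_add (hm : 2 ≤ m) (k : ℕ) (hk : m = 2 * k) (u : Equiv.Perm (Fin m)) :
    (Sset k u).card + (Sset k (u.trans (piPerm hm k hk))).card = k * k - k := by
  set π := piPerm hm k hk with hπdef
  set A := Finset.univ.filter (fun a => (u a).val < k) with hA
  set B := Finset.univ.filter (fun a => k ≤ (u a).val) with hB
  have hne : ∀ p : Fin m × Fin m, p.1.val ≠ p.2.val → (u p.1).val ≠ (u p.2).val :=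
    fun p h h2 => h (congrArg Fin.val (u.injective (Fin.ext h2)))
  have hdisj : Disjoint (Sset k u) (Sset k (u.trans π)) := by
    rw [Finset.disjoint_left]
    intro p hp hq
    rw [Sset, Finset.mem_filter] at hp hq
    obtain ⟨-, hp⟩ := hp
    obtain ⟨-, hq⟩ := hq
    simp only [Equiv.trans_apply, hπdef, piPerm_val] at hq
    have i1 := (u p.1).isLt
    have i2 := (u p.2).isLt
    split_ifs at hq <;> omega
  have hU : Sset k u ∪ Sset k (u.trans π) = ltP A ∪ gtP B := by
    ext p
    have hnep := hne p
    have i1 := (u p.1).isLt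
    have i2 := (u p.2).isLt
    simp only [Sset, ltP, gtP, hA, hB, Finset.mem_union, Finset.mem_filter, Finset.mem_univ,
      true_and, Equiv.trans_apply, hπdef, piPerm_val]
    split_ifs <;> omega
  have hd2 : Disjoint (ltP A) (gtP B) := by
    rw [Finset.disjoint_left]
    intro p hp hq
    rw [ltP, Finset.mem_filter] at hp
    rw [gtP, Finset.mem_filter] at hq
    omega
  have hcard : (Sset k u).card + (Sset k (u.trans π)).card = (ltP A).card + (gtP B).card := by
    rw [← Finset.card_union_of_disjoint hdisj, hU, Finset.card_union_of_disjoint hd2]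
  have h1 := two_mul_ltP A
  have h2 := two_mul_gtP B
  rw [card_top hm k hk u] at h1
  rw [card_bottom hm k hk u] at h2
  omega

lemma sum_S (hm : 2 ≤ m) (k : ℕ) (hk : m = 2 * k) :
    2 * ∑ u : Equiv.Perm (Fin m), (Sset k u).card = m.factorial * (k * k - k) := by
  set π := piPerm hm k hk with hπdef
  have hbij : Function.Bijective (fun u : Equiv.Perm (Fin m) => u.trans π) := by
    refine ⟨fun a b h => ?_, fun v => ⟨v.trans π.symm, ?_⟩⟩
    · have := congrArg (fun w : Equiv.Perm (Fin m) => w.trans π.symm) h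
      simpa [Equiv.trans_assoc] using this
    · simp [Equiv.trans_assoc]
  have h1 : ∑ u : Equiv.Perm (Fin m), (Sset k (u.trans π)).card
      = ∑ u : Equiv.Perm (Fin m), (Sset k u).card :=
    Fintype.sum_bijective _ hbij _ _ (fun u => rfl)
  have h2 : ∑ u : Equiv.Perm (Fin m), ((Sset k u).card + (Sset k (u.trans π)).card)
      = m.factorial * (k * k - k) := by
    rw [Finset.sum_congr rfl (fun u _ => card_S_add hm k hk u)]
    rw [Finset.sum_const, Finset.card_univ, Fintype.card_perm, Fintype.card_fin, smul_eq_mul]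
  rw [Finset.sum_add_distrib, h1] at h2
  omega

lemma sum_domDist_le (hm : 2 ≤ m) (k : ℕ) (hk : m = 2 * k) :
    2 * ∑ u : Equiv.Perm (Fin m), domDist (gsCat m) u ≤ m.factorial * (k * k - k) := by
  rw [← sum_S hm k hk]
  have h := Finset.sum_le_sum (s := Finset.univ)
    (fun u _ => domDist_le (m := m) hm k u)
  omega

end GS

theorem stmt6 (m : ℕ) (hmeven : Even m) (hm : 2 ≤ m) :
    ansd (gsCat m) ≤ (1 / 4) * (((m : ℚ) - 2) / ((m : ℚ) - 1)) ∧
    outDiv (gsCat m) ≥ 1 - (1 / 2) * (((m : ℚ) - 2) / ((m : ℚ) - 1)) ∧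
    outDiv (gsCat m) > 1 / 2 := by
  obtain ⟨k, hk0⟩ := hmeven
  have hk : m = 2 * k := by omega
  have hk1 : 1 ≤ k := by omega
  have hfpos : (0 : ℚ) < (m.factorial : ℚ) := by
    exact_mod_cast Nat.factorial_pos m
  have hkQ : (1 : ℚ) ≤ (k : ℚ) := by exact_mod_cast hk1
  have hmQ : (m : ℚ) = 2 * (k : ℚ) := by exact_mod_cast hk
  have hchoose : m.choose 2 = k * (2 * k - 1) := by
    rw [Nat.choose_two_right, hk]
    have h : 2 * k * (2 * k - 1) = 2 * (k * (2 * k - 1)) := by ring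
    rw [h, Nat.mul_div_cancel_left _ (by norm_num)]
  have hchooseQ : ((m.choose 2 : ℕ) : ℚ) = (k : ℚ) * (2 * (k : ℚ) - 1) := by
    rw [hchoose]
    push_cast [Nat.cast_sub (by omega : 1 ≤ 2 * k)]
    ring
  have hcpos : (0 : ℚ) < ((m.choose 2 : ℕ) : ℚ) := by
    rw [hchooseQ]; nlinarith
  have hQsum : (∑ u : Equiv.Perm (Fin m), (domDist (gsCat m) u : ℚ))
      ≤ (m.factorial : ℚ) * ((k : ℚ) * k - k) / 2 := by
    have h := GS.sum_domDist_le hm k hk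
    have hcast : ((2 * ∑ u : Equiv.Perm (Fin m), domDist (gsCat m) u : ℕ) : ℚ)
        ≤ ((m.factorial * (k * k - k) : ℕ) : ℚ) := Nat.cast_le.mpr h
    push_cast [Nat.cast_sub (Nat.le_mul_of_pos_left k hk1)] at hcast
    linarith
  have hansd : ansd (gsCat m) ≤ (1 / 4) * (((m : ℚ) - 2) / ((m : ℚ) - 1)) := by
    unfold ansd
    have hb : (∑ u : Equiv.Perm (Fin m), (domDist (gsCat m) u : ℚ)) / (m.factorial : ℚ)
          / ((m.choose 2 : ℕ) : ℚ)
        ≤ ((m.factorial : ℚ) * ((k : ℚ) * k - k) / 2) / (m.factorial : ℚ)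
          / ((m.choose 2 : ℕ) : ℚ) := by
      gcongr
    refine le_trans hb (le_of_eq ?_)
    rw [hchooseQ, hmQ]
    have h1 : ((m.factorial : ℕ) : ℚ) ≠ 0 := ne_of_gt hfpos
    have h2 : (k : ℚ) ≠ 0 := by positivity
    have h3 : (2 * (k : ℚ) - 1) ≠ 0 := by nlinarith
    field_simp
    ring
  have hmQ2 : (2 : ℚ) ≤ (m : ℚ) := by exact_mod_cast hm
  have hlt1 : ((m : ℚ) - 2) / ((m : ℚ) - 1) < 1 := by
    rw [div_lt_one (by linarith)]
    linarith
  have hge0 : (0 : ℚ) ≤ ((m : ℚ) - 2) / ((m : ℚ) - 1) := by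
    apply div_nonneg <;> linarith
  refine ⟨hansd, ?_, ?_⟩
  · unfold outDiv; linarith
  · unfold outDiv; linarith
end

section
/- A ranking v of candidates c_1,…,c_m is in the caterpillar group-separable domain if and only if the sequence of candidate indices read along v is unimodal (first increasing, then decreasing) with maximum m; consequently the caterpillar group-separable domain has exactly 2^{m-1} rankings. -/
/-- `IsCatFrontier i m l`: `l` is a frontier (after possibly reversing children of
some internal nodes) of the binary caterpillar GS-tree over candidates `i, i+1, …, m`,
whose leaf closest to the root is `c_i`. -/
inductive IsCatFrontier : ℕ → ℕ → List ℕ → Prop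
  | base (m : ℕ) : IsCatFrontier m m [m]
  | left {i m : ℕ} {l : List ℕ} : i < m → IsCatFrontier (i + 1) m l →
      IsCatFrontier i m (i :: l)
  | right {i m : ℕ} {l : List ℕ} : i < m → IsCatFrontier (i + 1) m l →
      IsCatFrontier i m (l ++ [i])

lemma cat_perm {i m : ℕ} {l : List ℕ} (h : IsCatFrontier i m l) :
    i ≤ m ∧ l.Perm (List.range' i (m - i + 1)) := by
  induction h with
  | base m => simp
  | @left i m l hlt h ih =>
    obtain ⟨h1, h2⟩ := ih
    refine ⟨le_of_lt hlt, ?_⟩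
    have : m - i + 1 = (m - (i+1) + 1) + 1 := by omega
    rw [this, List.range'_succ]
    exact h2.cons i
  | @right i m l hlt h ih =>
    obtain ⟨h1, h2⟩ := ih
    refine ⟨le_of_lt hlt, ?_⟩
    have : m - i + 1 = (m - (i+1) + 1) + 1 := by omega
    rw [this, List.range'_succ]
    exact (List.perm_append_singleton _ _).trans (h2.cons i)

lemma cat_mem {i m : ℕ} {l : List ℕ} (h : IsCatFrontier i m l) {x : ℕ} (hx : x ∈ l) :
    i ≤ x ∧ x ≤ m := by
  have hm := (cat_perm h).1
  have := (cat_perm h).2.mem_iff.mp hx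
  rw [List.mem_range'_1] at this
  omega

lemma cat_unimodal {i m : ℕ} {l : List ℕ} (h : IsCatFrontier i m l) :
    ∃ a d : List ℕ, l = a ++ m :: d ∧
      (a ++ [m]).Pairwise (· < ·) ∧ (m :: d).Pairwise (· > ·) := by
  induction h with
  | base m => exact ⟨[], [], by simp, by simp, by simp⟩
  | @left i m l hlt h ih =>
    obtain ⟨a, d, h1, h2, h3⟩ := ih
    refine ⟨i :: a, d, by simp [h1], ?_, h3⟩
    rw [List.cons_append, List.pairwise_cons]
    refine ⟨fun b hb => ?_, h2⟩
    rcases List.mem_append.mp hb with hb | hb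
    · have : b ∈ l := h1 ▸ List.mem_append_left _ hb
      have := cat_mem h this
      omega
    · simp at hb; omega
  | @right i m l hlt h ih =>
    obtain ⟨a, d, h1, h2, h3⟩ := ih
    refine ⟨a, d ++ [i], by simp [h1], h2, ?_⟩
    have : m :: (d ++ [i]) = (m :: d) ++ [i] := by simp
    rw [this, List.pairwise_append]
    refine ⟨h3, by simp, fun x hx y hy => ?_⟩
    simp at hy; subst hy
    rcases List.mem_cons.mp hx with hx | hx
    · omega
    · have : x ∈ l := h1 ▸ (by simp [hx])
      have := cat_mem h this
      omega

lemma cat_of {k i m : ℕ} (hk : m - i ≤ k) (h : i ≤ m) {l : List ℕ}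
    (hp : l.Perm (List.range' i (m - i + 1)))
    {a d : List ℕ} (hl : l = a ++ m :: d)
    (ha : (a ++ [m]).Pairwise (· < ·)) (hd : (m :: d).Pairwise (· > ·)) :
    IsCatFrontier i m l := by
  induction k generalizing i l a d with
  | zero =>
    have him : i = m := by omega
    have h0 : m - i + 1 = 1 := by omega
    rw [h0] at hp
    simp only [List.range'_one, List.perm_singleton] at hp
    rw [hp, him]; exact .base m
  | succ k ih =>
    rcases eq_or_lt_of_le h with him | hlt
    · have h0 : m - i + 1 = 1 := by omega
      rw [h0] at hp
      simp only [List.range'_one, List.perm_singleton] at hp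
      rw [hp, him]; exact .base m
    · -- i < m
      have hmem : ∀ x ∈ l, i ≤ x ∧ x ≤ m := by
        intro x hx
        have := hp.mem_iff.mp hx
        rw [List.mem_range'_1] at this
        omega
      have hiL : i ∈ l := by
        rw [hp.mem_iff, List.mem_range'_1]; omega
      have hperm' : ∀ l' : List ℕ, l.Perm (i :: l') →
          l'.Perm (List.range' (i+1) (m - (i+1) + 1)) := by
        intro l' hpl
        have h2 : (i :: l').Perm (List.range' i (m - i + 1)) := hpl.symm.trans hp
        have h3 : m - i + 1 = (m - (i+1) + 1) + 1 := by omega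
        rw [h3, List.range'_succ] at h2
        exact h2.cons_inv
      rw [hl] at hiL
      rcases List.mem_append.mp hiL with hia | hid
      · -- i is in a; it must be the head
        obtain ⟨a', rfl⟩ : ∃ a', a = i :: a' := by
          cases a with
          | nil => simp at hia
          | cons b a' =>
            rcases List.mem_cons.mp hia with rfl | hia'
            · exact ⟨a', rfl⟩
            · exfalso
              rw [List.cons_append] at ha
              have hb : b < i :=
                List.rel_of_pairwise_cons ha (List.mem_append_left _ hia')
              have : b ∈ l := hl ▸ List.mem_append_left _ (by simp)
              have := hmem b this
              omega
        rw [hl]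
        have hrest : IsCatFrontier (i+1) m (a' ++ m :: d) := by
          refine ih (by omega) (by omega) (hperm' _ (by rw [hl]; simp)) rfl ?_ hd
          rw [List.cons_append] at ha
          exact ha.of_cons
        simpa using IsCatFrontier.left hlt hrest
      · -- i is in d; it must be the last
        rcases List.mem_cons.mp hid with rfl | hid'
        · omega
        obtain ⟨d₁, d₂, rfl⟩ := List.mem_iff_append.mp hid'
        obtain rfl : d₂ = [] := by
          cases d₂ with
          | nil => rfl
          | cons x d₂' =>
            exfalso
            have h1 : List.Pairwise (· > ·) (d₁ ++ i :: x :: d₂') := hd.of_cons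
            have h2 : List.Pairwise (· > ·) (i :: x :: d₂') :=
              (List.pairwise_append.mp h1).2.1
            have hxi : x < i := List.rel_of_pairwise_cons h2 (by simp)
            have : x ∈ l := by rw [hl]; simp
            have := hmem x this
            omega
        rw [hl]
        have hrest : IsCatFrontier (i+1) m (a ++ m :: d₁) := by
          refine ih (by omega) (by omega) ?_ rfl ha ?_
          · refine hperm' _ ?_
            rw [hl]
            have e : a ++ m :: (d₁ ++ [i]) = (a ++ m :: d₁) ++ [i] := by simp
            rw [e]
            exact List.perm_append_singleton _ _
          · have hd2 : List.Pairwise (· > ·) ((m :: d₁) ++ [i]) := by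
              rw [List.cons_append]; exact hd
            exact (List.pairwise_append.mp hd2).1
        have : a ++ m :: (d₁ ++ [i]) = (a ++ m :: d₁) ++ [i] := by simp
        rw [this]
        exact IsCatFrontier.right hlt hrest

lemma cat_eq_single {l : List ℕ} {m : ℕ} (h : IsCatFrontier m m l) : l = [m] := by
  cases h with
  | base => rfl
  | left hlt _ => exact absurd hlt (lt_irrefl _)
  | right hlt _ => exact absurd hlt (lt_irrefl _)

lemma cat_mem_m {i m : ℕ} {l : List ℕ} (h : IsCatFrontier i m l) : m ∈ l := by
  rw [(cat_perm h).2.mem_iff, List.mem_range'_1]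
  have := (cat_perm h).1
  omega

lemma cat_card (k i m : ℕ) (hk : m - i ≤ k) (h : i ≤ m) :
    Nat.card {l : List ℕ // IsCatFrontier i m l} = 2 ^ (m - i) := by
  induction k generalizing i with
  | zero =>
    have him : i = m := by omega
    subst him
    have : Unique {l : List ℕ // IsCatFrontier i i l} :=
      ⟨⟨⟨[i], .base i⟩⟩, fun ⟨l, hl⟩ => Subtype.ext (cat_eq_single hl)⟩
    simp [Nat.card_unique, Nat.sub_self]
  | succ k ih =>
    rcases eq_or_lt_of_le h with him | hlt
    · subst him
      have : Unique {l : List ℕ // IsCatFrontier i i l} :=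
        ⟨⟨⟨[i], .base i⟩⟩, fun ⟨l, hl⟩ => Subtype.ext (cat_eq_single hl)⟩
      simp [Nat.card_unique, Nat.sub_self]
    · set g : Bool × {l : List ℕ // IsCatFrontier (i+1) m l} →
          {l : List ℕ // IsCatFrontier i m l} :=
        fun p => match p with
          | (true, ⟨l, hl⟩) => ⟨i :: l, .left hlt hl⟩
          | (false, ⟨l, hl⟩) => ⟨l ++ [i], .right hlt hl⟩ with hg
      have hlast : ∀ (l₁ l₂ : List ℕ), IsCatFrontier (i+1) m l₁ →
          IsCatFrontier (i+1) m l₂ → i :: l₁ ≠ l₂ ++ [i] := by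
        intro l₁ l₂ h1 h2 he
        have hne : l₁ ≠ [] := by
          intro e; rw [e] at h1
          simpa using cat_mem_m h1
        obtain ⟨x, hx⟩ : ∃ x, l₁.getLast? = some x := by
          rcases Option.isSome_iff_exists.mp (List.getLast?_isSome.mpr hne) with ⟨x, hx⟩
          exact ⟨x, hx⟩
        have hx1 : i + 1 ≤ x := (cat_mem h1 (List.mem_of_getLast? hx)).1
        have : (i :: l₁).getLast? = some i := by rw [he]; exact List.getLast?_concat
        rw [show i :: l₁ = [i] ++ l₁ from rfl, List.getLast?_append, hx] at this
        simp at this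
        omega
      have hbij : Function.Bijective g := by
        constructor
        · rintro ⟨b₁, l₁, h1⟩ ⟨b₂, l₂, h2⟩ he
          match b₁, b₂ with
          | true, true =>
            simp only [hg, Subtype.mk.injEq, List.cons.injEq] at he
            simp [he.2]
          | false, false =>
            simp only [hg, Subtype.mk.injEq] at he
            simp [List.append_cancel_right he]
          | true, false =>
            exact absurd (congrArg Subtype.val he) (hlast _ _ h1 h2)
          | false, true =>
            exact absurd (congrArg Subtype.val he).symm (hlast _ _ h2 h1)
        · rintro ⟨l, hl⟩
          cases hl with
          | base => exact absurd hlt (lt_irrefl _)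
          | left h' hl' => exact ⟨(true, ⟨_, hl'⟩), rfl⟩
          | right h' hl' => exact ⟨(false, ⟨_, hl'⟩), rfl⟩
      have hcard := Nat.card_eq_of_bijective g hbij
      rw [Nat.card_prod, ih (i+1) (by omega) (by omega)] at hcard
      rw [← hcard]
      have : Nat.card Bool = 2 := by simp [Nat.card_eq_fintype_card]
      rw [this, show m - i = (m - (i+1)) + 1 by omega, pow_succ]
      ring

theorem stmt7 (m : ℕ) (hm : 1 ≤ m) :
    (∀ l : List ℕ, IsCatFrontier 1 m l ↔
      (l.Perm (List.range' 1 m) ∧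
        ∃ a d : List ℕ, l = a ++ m :: d ∧
          (a ++ [m]).Pairwise (· < ·) ∧ (m :: d).Pairwise (· > ·))) ∧
    Nat.card {l : List ℕ // IsCatFrontier 1 m l} = 2 ^ (m - 1) := by
  constructor
  · intro l
    constructor
    · intro h
      refine ⟨?_, cat_unimodal h⟩
      have := (cat_perm h).2
      rwa [show m - 1 + 1 = m by omega] at this
    · rintro ⟨hp, a, d, hl, ha, hd⟩
      exact cat_of (k := m) (by omega) hm
        (by rw [show m - 1 + 1 = m by omega]; exact hp) hl ha hd
  · exact cat_card m 1 m (by omega) hm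
end

section
/- Let D be the group-separable domain over m = 2^k candidates defined by a balanced binary tree (GS/bal). For every ranking v ∈ D, the number of rankings u ∉ D at swap distance exactly 1 from v whose nearest member of D is uniquely v is exactly 2^{k-1} − 1 = m/2 − 1; equivalently, v has m−1 adjacent-transposition neighbors, of which m/2 lie in D and m/2 − 1 lie outside D and are at distance > 1 from every other member of D. -/
/-- Swap distance between two rankings represented as duplicate-free lists of
candidates (top candidate first): the number of pairs of candidates ordered
oppositely by the two lists. -/
def listSwapDist (u v : List ℕ) : ℕ :=
  ((u.toFinset ×ˢ u.toFinset).filter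
    (fun p => u.idxOf p.1 < u.idxOf p.2 ∧ v.idxOf p.2 < v.idxOf p.1)).card

/-- `IsBal k o l` : `l` is a frontier (after possibly reversing children of some
internal nodes) of the complete balanced binary GS-tree over the `2^k` candidates
`o, o+1, …, o + 2^k - 1`. The domain GS/bal over `m = 2^k` candidates is
`{l | IsBal k 0 l}`. -/
inductive IsBal : ℕ → ℕ → List ℕ → Prop
  | leaf (o : ℕ) : IsBal 0 o [o]
  | node {k o : ℕ} {l₁ l₂ : List ℕ} :
      IsBal k o l₁ → IsBal k (o + 2 ^ k) l₂ → IsBal (k + 1) o (l₁ ++ l₂)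
  | nodeRev {k o : ℕ} {l₁ l₂ : List ℕ} :
      IsBal k o l₁ → IsBal k (o + 2 ^ k) l₂ → IsBal (k + 1) o (l₂ ++ l₁)

open List

def swapAdj : List ℕ → ℕ → List ℕ
  | a :: b :: l, 0 => b :: a :: l
  | a :: l, (i+1) => a :: swapAdj l i
  | l, _ => l

@[simp] lemma swapAdj_zero (a b : ℕ) (l : List ℕ) : swapAdj (a :: b :: l) 0 = b :: a :: l := rfl
@[simp] lemma swapAdj_succ (a : ℕ) (l : List ℕ) (i : ℕ) : swapAdj (a :: l) (i+1) = a :: swapAdj l i := by cases l <;> rfl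
@[simp] lemma swapAdj_nil (i : ℕ) : swapAdj [] i = [] := by cases i <;> rfl
@[simp] lemma swapAdj_single (a : ℕ) (i : ℕ) : swapAdj [a] i = [a] := by cases i <;> rfl

lemma swapAdj_perm (l : List ℕ) (i : ℕ) : (swapAdj l i).Perm l := by
  induction l generalizing i with
  | nil => simp
  | cons a l ih =>
    cases i with
    | zero => cases l with
      | nil => simp
      | cons b l => simpa using Perm.swap a b l
    | succ i => simpa using (ih i).cons a

@[simp] lemma swapAdj_length (l : List ℕ) (i : ℕ) : (swapAdj l i).length = l.length :=
  (swapAdj_perm l i).length_eq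

lemma swapAdj_append_left (l₁ l₂ : List ℕ) (i : ℕ) (h : i + 1 < l₁.length) :
    swapAdj (l₁ ++ l₂) i = swapAdj l₁ i ++ l₂ := by
  induction l₁ generalizing i with
  | nil => simp at h
  | cons a l ih =>
    cases i with
    | zero =>
      cases l with
      | nil => simp at h
      | cons b l => simp
    | succ i =>
      simp only [length_cons, add_lt_add_iff_right] at h
      simp [ih i h]

lemma swapAdj_append_right (l₁ l₂ : List ℕ) (i : ℕ) :
    swapAdj (l₁ ++ l₂) (l₁.length + i) = l₁ ++ swapAdj l₂ i := by
  induction l₁ with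
  | nil => simp
  | cons a l ih => simpa [Nat.succ_add] using ih

lemma indexOf_swapAdj (l : List ℕ) (hnd : l.Nodup) (i : ℕ) (hi : i + 1 < l.length) (a : ℕ) :
    idxOf a (swapAdj l i) =
      if a = l[i] then i + 1 else if a = l[i+1]'hi then i else idxOf a l := by
  induction l generalizing i with
  | nil => simp at hi
  | cons x t ih =>
    rcases List.nodup_cons.mp hnd with ⟨hx, hnt⟩
    cases i with
    | zero =>
      match t, hi with
      | y :: t, _ =>
        simp only [swapAdj_zero, getElem_cons_zero, getElem_cons_succ]
        have hxy : x ≠ y := by rintro rfl; simp at hx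
        by_cases hax : a = x
        · subst hax
          simp [idxOf_cons_ne _ hxy.symm, List.idxOf_cons_self]
        · by_cases hay : a = y
          · subst hay; simp [List.idxOf_cons_self, idxOf_cons_ne, hxy, hax]
          · simp [idxOf_cons_ne _ (Ne.symm hax), idxOf_cons_ne _ (Ne.symm hay), hax, hay]
    | succ i =>
      have hi' : i + 1 < t.length := by simpa using hi
      simp only [swapAdj_succ, getElem_cons_succ]
      by_cases hax : a = x
      · subst hax
        have h1 : a ≠ t[i]'(Nat.lt_of_succ_lt hi') := fun h => hx (h ▸ getElem_mem _)
        have h2 : a ≠ t[i+1]'hi' := fun h => hx (h ▸ getElem_mem _)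
        simp [h1, h2, List.idxOf_cons_self]
      · rw [idxOf_cons_ne _ (Ne.symm hax), idxOf_cons_ne _ (Ne.symm hax), ih hnt i hi']
        have hne : t[i+1]'hi' ≠ t[i]'(Nat.lt_of_succ_lt hi') := by
          rw [Ne, hnt.getElem_inj_iff]; omega
        by_cases h1 : a = t[i]'(Nat.lt_of_succ_lt hi') <;>
          by_cases h2 : a = t[i+1]'hi' <;>
          simp_all [Nat.succ_eq_add_one]


lemma IsBal.perm_range' {k o : ℕ} {l : List ℕ} (h : IsBal k o l) :
    l.Perm (List.range' o (2 ^ k)) := by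
  induction h with
  | leaf o => simp [List.range'_one]
  | node h1 h2 ih1 ih2 =>
    rename_i k' o' l₁ l₂
    have e : (2:ℕ) ^ (k'+1) = 2^k' + 2^k' := by rw [pow_succ]; ring
    rw [e, ← List.range'_append_1]
    exact ih1.append ih2
  | nodeRev h1 h2 ih1 ih2 =>
    rename_i k' o' l₁ l₂
    have e : (2:ℕ) ^ (k'+1) = 2^k' + 2^k' := by rw [pow_succ]; ring
    rw [e, ← List.range'_append_1]
    exact (ih2.append ih1).trans List.perm_append_comm

lemma IsBal.length {k o : ℕ} {l : List ℕ} (h : IsBal k o l) : l.length = 2 ^ k := by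
  simpa using h.perm_range'.length_eq

lemma IsBal.nodup {k o : ℕ} {l : List ℕ} (h : IsBal k o l) : l.Nodup :=
  h.perm_range'.nodup_iff.mpr (List.nodup_range')

lemma IsBal.mem_iff {k o : ℕ} {l : List ℕ} (h : IsBal k o l) (a : ℕ) :
    a ∈ l ↔ o ≤ a ∧ a < o + 2 ^ k := by
  rw [h.perm_range'.mem_iff, List.mem_range'_1]


lemma eq_of_sameOrder : ∀ {v u : List ℕ}, v.Nodup → u.Perm v →
    (∀ a ∈ v, ∀ b ∈ v, idxOf a v < idxOf b v → idxOf a u < idxOf b u) → u = v := by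
  intro v
  induction v with
  | nil => intro u _ hp _; simpa using hp
  | cons y v' ih =>
    intro u hnd hp h
    rcases List.nodup_cons.mp hnd with ⟨hy, hnd'⟩
    obtain ⟨x, u', rfl⟩ : ∃ x u'', u = x :: u'' := by
      cases u with
      | nil => exact absurd hp.symm (by simp)
      | cons a b => exact ⟨a, b, rfl⟩
    have hxy : x = y := by
      by_contra hne
      have hxv : x ∈ y :: v' := hp.subset (by simp)
      have h0 : idxOf y (y :: v') < idxOf x (y :: v') := by
        rw [List.idxOf_cons_self, idxOf_cons_ne _ (Ne.symm hne)]
        exact Nat.succ_pos _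
      have := h y (by simp) x hxv h0
      simp [List.idxOf_cons_self] at this
    subst hxy
    have hp' : u'.Perm v' := hp.cons_inv
    have : u' = v' := by
      refine ih hnd' hp' ?_
      intro a ha b hb hab
      have hay : a ≠ x := fun e => hy (e ▸ ha)
      have hby : b ≠ x := fun e => hy (e ▸ hb)
      have := h a (by simp [ha]) b (by simp [hb]) (by
        rwa [idxOf_cons_ne _ (Ne.symm hay), idxOf_cons_ne _ (Ne.symm hby), Nat.succ_lt_succ_iff])
      rwa [idxOf_cons_ne _ (Ne.symm hay), idxOf_cons_ne _ (Ne.symm hby), Nat.succ_lt_succ_iff] at this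
    rw [this]


lemma distFilter_swapAdj (v : List ℕ) (hnd : v.Nodup) (i : ℕ) (hi : i + 1 < v.length) :
    ((v.toFinset ×ˢ v.toFinset).filter
      (fun p => v.idxOf p.1 < v.idxOf p.2 ∧
        (swapAdj v i).idxOf p.2 < (swapAdj v i).idxOf p.1))
      = {(v[i], v[i+1]'hi)} := by
  have hii : i < v.length := Nat.lt_of_succ_lt hi
  have hAB : v[i] ≠ v[i+1]'hi := by rw [Ne, hnd.getElem_inj_iff]; omega
  ext ⟨a, b⟩
  simp only [Finset.mem_filter, Finset.mem_product, List.mem_toFinset, Finset.mem_singleton,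
    Prod.mk.injEq]
  rw [indexOf_swapAdj v hnd i hi a, indexOf_swapAdj v hnd i hi b]
  constructor
  · rintro ⟨⟨ha, hb⟩, hlt, hlt'⟩
    have hia : idxOf a v < v.length := idxOf_lt_length_iff.mpr ha
    have hib : idxOf b v < v.length := idxOf_lt_length_iff.mpr hb
    have e1 : idxOf (v[i]) v = i := Nodup.idxOf_getElem hnd i hii
    have e2 : idxOf (v[i+1]'hi) v = i+1 := Nodup.idxOf_getElem hnd (i+1) hi
    by_cases h1 : a = v[i] <;> by_cases h2 : b = v[i+1]'hi
    · exact ⟨h1, h2⟩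
    all_goals
      by_cases h3 : a = v[i+1]'hi <;> by_cases h4 : b = v[i]
      all_goals simp_all
      all_goals omega
  · rintro ⟨rfl, rfl⟩
    refine ⟨⟨getElem_mem _, getElem_mem _⟩, ?_, ?_⟩
    · rw [Nodup.idxOf_getElem hnd i hii, Nodup.idxOf_getElem hnd (i+1) hi]; omega
    · simp [hAB, Ne.symm hAB]

lemma listSwapDist_swapAdj (v : List ℕ) (hnd : v.Nodup) (i : ℕ) (hi : i + 1 < v.length) :
    listSwapDist v (swapAdj v i) = 1 := by
  unfold listSwapDist
  rw [distFilter_swapAdj v hnd i hi]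
  simp

lemma exists_swapAdj_of_dist_one (v u : List ℕ) (hnd : v.Nodup) (hp : u.Perm v)
    (h : listSwapDist v u = 1) : ∃ i, i + 1 < v.length ∧ u = swapAdj v i := by
  unfold listSwapDist at h
  obtain ⟨p, hS⟩ := Finset.card_eq_one.mp h
  obtain ⟨a, b⟩ := p
  have hmem : (a, b) ∈ (v.toFinset ×ˢ v.toFinset).filter
      (fun p => v.idxOf p.1 < v.idxOf p.2 ∧ u.idxOf p.2 < u.idxOf p.1) := by
    rw [hS]; simp
  simp only [Finset.mem_filter, Finset.mem_product, List.mem_toFinset] at hmem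
  obtain ⟨⟨ha, hb⟩, hab, hba⟩ := hmem
  have hund : u.Nodup := hp.nodup_iff.mpr hnd
  -- key: all other pairs keep their order
  have key : ∀ c ∈ v, ∀ d ∈ v, idxOf c v < idxOf d v → (c, d) ≠ (a, b) →
      idxOf c u < idxOf d u := by
    intro c hc d hd hcd hne
    have hnotmem : (c, d) ∉ ({(a,b)} : Finset (ℕ × ℕ)) := by simpa using hne
    rw [← hS, Finset.mem_filter] at hnotmem
    have h1 : ¬ (idxOf d u < idxOf c u) := by
      intro hlt; exact hnotmem ⟨by simp [hc, hd], hcd, hlt⟩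
    have hcd' : c ≠ d := by
      intro e; rw [e] at hcd; omega
    have : idxOf c u ≠ idxOf d u := by
      rw [Ne, idxOf_inj (hp.mem_iff.mpr hc)]
      exact hcd'
    omega
  set ia := idxOf a v with hia
  set ib := idxOf b v with hib
  have hial : ia < v.length := idxOf_lt_length_iff.mpr ha
  have hibl : ib < v.length := idxOf_lt_length_iff.mpr hb
  have hadj : ib = ia + 1 := by
    by_contra hne
    have h2 : ia + 1 < ib := by omega
    have hc : ia + 1 < v.length := by omega
    set c := v[ia+1] with hcdef
    have hcv : c ∈ v := getElem_mem _
    have hic : idxOf c v = ia + 1 := Nodup.idxOf_getElem hnd _ hc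
    have hcb : c ≠ b := by
      intro e
      rw [e] at hic; omega
    have hca : c ≠ a := by
      intro e
      rw [e] at hic; omega
    have k1 : idxOf a u < idxOf c u := by
      refine key a ha c hcv (by omega) ?_
      simp [hcb]
    have k2 : idxOf c u < idxOf b u := by
      refine key c hcv b hb (by omega) ?_
      simp [hca]
    omega
  have hi : ia + 1 < v.length := by omega
  have haeq : a = v[ia] := (getElem_idxOf hial).symm
  have hbeq : b = v[ia+1]'hi := by
    have h5 : v[ib]'hibl = b := getElem_idxOf hibl
    rw [← h5]
    congr 1
    try omega
  have hne_ab : a ≠ b := by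
    intro e; rw [e] at hia; omega
  have ina : idxOf a v = ia := hia.symm
  have inb : idxOf b v = ia + 1 := by rw [← hib, hadj]
  have idx : ∀ x, idxOf x (swapAdj v ia) =
      if x = a then ia + 1 else if x = b then ia else idxOf x v := by
    intro x
    rw [indexOf_swapAdj v hnd ia hi x]
    simp only [show v[ia] = a from haeq.symm, show v[ia+1]'hi = b from hbeq.symm]
  refine ⟨ia, hi, ?_⟩
  have hw : (swapAdj v ia).Perm v := swapAdj_perm v ia
  refine eq_of_sameOrder (hw.nodup_iff.mpr hnd) (hp.trans hw.symm) ?_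
  intro c hc d hd hcd
  have hcv : c ∈ v := hw.subset hc
  have hdv : d ∈ v := hw.subset hd
  rw [idx c, idx d] at hcd
  have hca' : c ≠ a → idxOf c v ≠ ia := fun h e =>
    h ((idxOf_inj hcv).mp (by rw [e, ina]))
  have hcb' : c ≠ b → idxOf c v ≠ ia + 1 := fun h e =>
    h ((idxOf_inj hcv).mp (by rw [e, inb]))
  have hda' : d ≠ a → idxOf d v ≠ ia := fun h e =>
    h ((idxOf_inj hdv).mp (by rw [e, ina]))
  have hdb' : d ≠ b → idxOf d v ≠ ia + 1 := fun h e =>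
    h ((idxOf_inj hdv).mp (by rw [e, inb]))
  by_cases hc1 : c = a
  · by_cases hd2 : d = b
    · rw [if_pos hc1, if_neg (show ¬ d = a by rw [hd2]; exact Ne.symm hne_ab),
        if_pos hd2] at hcd
      omega
    · by_cases hd1 : d = a
      · rw [if_pos hc1, if_pos hd1] at hcd
        omega
      · rw [if_pos hc1, if_neg hd1, if_neg hd2] at hcd
        rw [hc1]
        exact key a ha d hdv (by omega) (by simp [hd2])
  · by_cases hc2 : c = b
    · by_cases hd1 : d = a
      · rw [hc2, hd1]
        exact hba
      · by_cases hd2 : d = b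
        · rw [if_neg hc1, if_pos hc2, if_neg hd1, if_pos hd2] at hcd
          omega
        · rw [if_neg hc1, if_pos hc2, if_neg hd1, if_neg hd2] at hcd
          have t1 := hda' hd1
          have t2 := hdb' hd2
          rw [hc2]
          exact key b hb d hdv (by omega) (by simp [hd2])
    · rw [if_neg hc1, if_neg hc2] at hcd
      have t1 := hca' hc1
      by_cases hd1 : d = a
      · rw [if_pos hd1] at hcd
        rw [hd1]
        exact key c hcv a ha (by omega) (by simp [hne_ab])
      · by_cases hd2 : d = b
        · rw [if_neg hd1, if_pos hd2] at hcd
          rw [hd2]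
          exact key c hcv b hb (by omega) (by simp [hc1])
        · rw [if_neg hd1, if_neg hd2] at hcd
          exact key c hcv d hdv hcd (by simp [hc1])


lemma IsBal.swapAdj_even {k o : ℕ} {l : List ℕ} (h : IsBal k o l) :
    ∀ i, i % 2 = 0 → i + 1 < 2 ^ k → IsBal k o (swapAdj l i) := by
  induction h with
  | leaf o => intro i _ hi; norm_num at hi
  | node h1 h2 ih1 ih2 =>
    rename_i k' o' l₁ l₂
    intro i he hi
    have hl1 : l₁.length = 2 ^ k' := h1.length
    have hl2 : l₂.length = 2 ^ k' := h2.length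
    rcases lt_trichotomy (i+1) (2^k') with hlt | heq | hgt
    · rw [swapAdj_append_left _ _ _ (by omega)]
      exact (ih1 i he (by omega)).node h2
    · cases k' with
      | zero =>
        have hi0 : i = 0 := by norm_num at heq; omega
        subst hi0
        cases h1
        cases h2
        have e : swapAdj ([o'] ++ [o' + 2 ^ 0]) 0 = [o' + 2 ^ 0] ++ [o'] := by simp
        rw [e]
        exact IsBal.nodeRev (IsBal.leaf o') (IsBal.leaf (o' + 2 ^ 0))
      | succ m =>
        exfalso
        have : 2 ^ (m+1) = 2 * 2 ^ m := by rw [pow_succ]; ring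
        omega
    · have hpar : k' = 0 ∨ 2 ^ k' % 2 = 0 := by
        cases k' with
        | zero => exact Or.inl rfl
        | succ m => right; rw [pow_succ]; omega
      have hsucc : 2 ^ (k'+1) = 2 ^ k' + 2 ^ k' := by rw [pow_succ]; ring
      rcases hpar with h0 | hev
      · subst h0; norm_num at hgt hi; omega
      · rw [show i = l₁.length + (i - l₁.length) by omega, swapAdj_append_right]
        exact h1.node (ih2 (i - l₁.length) (by omega) (by omega))
  | nodeRev h1 h2 ih1 ih2 =>
    rename_i k' o' l₁ l₂
    intro i he hi
    have hl1 : l₁.length = 2 ^ k' := h1.length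
    have hl2 : l₂.length = 2 ^ k' := h2.length
    rcases lt_trichotomy (i+1) (2^k') with hlt | heq | hgt
    · rw [swapAdj_append_left _ _ _ (by omega)]
      exact IsBal.nodeRev h1 (ih2 i he (by omega))
    · cases k' with
      | zero =>
        have hi0 : i = 0 := by norm_num at heq; omega
        subst hi0
        cases h1
        cases h2
        show IsBal 1 o' (swapAdj ([o' + 2 ^ 0] ++ [o']) 0)
        have : swapAdj ([o' + 2 ^ 0] ++ [o']) 0 = [o'] ++ [o' + 2 ^ 0] := by simp
        rw [this]
        exact IsBal.node (IsBal.leaf o') (IsBal.leaf (o' + 2 ^ 0))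
      | succ m =>
        exfalso
        have : 2 ^ (m+1) = 2 * 2 ^ m := by rw [pow_succ]; ring
        omega
    · have hpar : k' = 0 ∨ 2 ^ k' % 2 = 0 := by
        cases k' with
        | zero => exact Or.inl rfl
        | succ m => right; rw [pow_succ]; omega
      have hsucc : 2 ^ (k'+1) = 2 ^ k' + 2 ^ k' := by rw [pow_succ]; ring
      rcases hpar with h0 | hev
      · subst h0; norm_num at hgt hi; omega
      · rw [show i = l₂.length + (i - l₂.length) by omega, swapAdj_append_right]
        exact IsBal.nodeRev (ih1 (i - l₂.length) (by omega) (by omega)) h2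


lemma IsBal.split {k o : ℕ} {l : List ℕ} (h : IsBal (k+1) o l) :
    ∃ l₁ l₂, IsBal k o l₁ ∧ IsBal k (o + 2^k) l₂ ∧ (l = l₁ ++ l₂ ∨ l = l₂ ++ l₁) := by
  cases h with
  | node h1 h2 => exact ⟨_, _, h1, h2, Or.inl rfl⟩
  | nodeRev h1 h2 => exact ⟨_, _, h1, h2, Or.inr rfl⟩

lemma crossing : ∀ (k : ℕ) (o : ℕ) (v w : List ℕ) (a b : ℕ),
    IsBal k o v → IsBal k o w → a ∈ v → b ∈ v →
    idxOf b v = idxOf a v + 1 → idxOf a v % 2 = 1 →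
    idxOf b w < idxOf a w →
    ∃ a₂ b₂, a₂ ∈ v ∧ b₂ ∈ v ∧ a₂ ≠ a ∧ b₂ ≠ b ∧
      idxOf a₂ v < idxOf b v ∧ idxOf b w < idxOf a₂ w ∧
      idxOf a v < idxOf b₂ v ∧ idxOf b₂ w < idxOf a w := by
  intro k
  induction k with
  | zero =>
    intro o v w a b hv hw hav hbv hadj hodd hinv
    exfalso
    cases hv
    simp at hav hbv
    subst hav; subst hbv
    omega
  | succ k ih =>
    intro o v w a b hv hw hav hbv hadj hodd hinv
    obtain ⟨p₁, p₂, hv1, hv2, hvor⟩ := hv.split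
    obtain ⟨q₁, q₂, hw1, hw2, hwor⟩ := hw.split
    have hp1l : p₁.length = 2^k := hv1.length
    have hp2l : p₂.length = 2^k := hv2.length
    have hq1l : q₁.length = 2^k := hw1.length
    have hq2l : q₂.length = 2^k := hw2.length
    -- range facts
    have hva := (hv.mem_iff a).mp hav
    have hvb := (hv.mem_iff b).mp hbv
    -- disjointness helpers
    have hnot12 : ∀ x, x ∈ p₂ → x ∉ p₁ := fun x h2 h1 => by
      have := (hv1.mem_iff x).mp h1; have := (hv2.mem_iff x).mp h2; omega
    have hnot21 : ∀ x, x ∈ p₁ → x ∉ p₂ := fun x h1 h2 => by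
      have := (hv1.mem_iff x).mp h1; have := (hv2.mem_iff x).mp h2; omega
    have hwnot12 : ∀ x, x ∈ q₂ → x ∉ q₁ := fun x h2 h1 => by
      have := (hw1.mem_iff x).mp h1; have := (hw2.mem_iff x).mp h2; omega
    have hwnot21 : ∀ x, x ∈ q₁ → x ∉ q₂ := fun x h1 h2 => by
      have := (hw1.mem_iff x).mp h1; have := (hw2.mem_iff x).mp h2; omega
    obtain ⟨c₁, c₂, hc, widx1, widx2⟩ :
        ∃ c₁ c₂ : ℕ, ((c₁ = 0 ∧ c₂ = 2^k) ∨ (c₁ = 2^k ∧ c₂ = 0)) ∧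
          (∀ x ∈ q₁, idxOf x w = c₁ + idxOf x q₁) ∧
          (∀ x ∈ q₂, idxOf x w = c₂ + idxOf x q₂) := by
      rcases hwor with rfl | rfl
      · refine ⟨0, 2^k, Or.inl ⟨rfl, rfl⟩, fun x hx => ?_, fun x hx => ?_⟩
        · rw [idxOf_append_of_mem hx, Nat.zero_add]
        · rw [idxOf_append_of_notMem (hwnot12 x hx), hq1l]
      · refine ⟨2^k, 0, Or.inr ⟨rfl, rfl⟩, fun x hx => ?_, fun x hx => ?_⟩
        · rw [idxOf_append_of_notMem (hwnot21 x hx), hq2l]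
        · rw [idxOf_append_of_mem hx, Nat.zero_add]
    obtain ⟨d₁, d₂, hd, vidx1, vidx2⟩ :
        ∃ d₁ d₂ : ℕ, ((d₁ = 0 ∧ d₂ = 2^k) ∨ (d₁ = 2^k ∧ d₂ = 0)) ∧
          (∀ x ∈ p₁, idxOf x v = d₁ + idxOf x p₁) ∧
          (∀ x ∈ p₂, idxOf x v = d₂ + idxOf x p₂) := by
      rcases hvor with rfl | rfl
      · refine ⟨0, 2^k, Or.inl ⟨rfl, rfl⟩, fun x hx => ?_, fun x hx => ?_⟩
        · rw [idxOf_append_of_mem hx, Nat.zero_add]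
        · rw [idxOf_append_of_notMem (hnot12 x hx), hp1l]
      · refine ⟨2^k, 0, Or.inr ⟨rfl, rfl⟩, fun x hx => ?_, fun x hx => ?_⟩
        · rw [idxOf_append_of_notMem (hnot21 x hx), hp2l]
        · rw [idxOf_append_of_mem hx, Nat.zero_add]
    have memv1 : ∀ x ∈ p₁, x ∈ v := by
      intro x hx; rcases hvor with rfl | rfl <;> simp [hx]
    have memv2 : ∀ x ∈ p₂, x ∈ v := by
      intro x hx; rcases hvor with rfl | rfl <;> simp [hx]
    have bnd1 : ∀ x ∈ p₁, idxOf x p₁ < 2^k := fun x hx => hp1l ▸ idxOf_lt_length_iff.mpr hx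
    have bnd2 : ∀ x ∈ p₂, idxOf x p₂ < 2^k := fun x hx => hp2l ▸ idxOf_lt_length_iff.mpr hx
    have wbnd1 : ∀ x ∈ q₁, idxOf x q₁ < 2^k := fun x hx => hq1l ▸ idxOf_lt_length_iff.mpr hx
    have wbnd2 : ∀ x ∈ q₂, idxOf x q₂ < 2^k := fun x hx => hq2l ▸ idxOf_lt_length_iff.mpr hx
    have q1of : ∀ x ∈ p₁, x ∈ q₁ := fun x hx => (hw1.mem_iff x).mpr ((hv1.mem_iff x).mp hx)
    have q2of : ∀ x ∈ p₂, x ∈ q₂ := fun x hx => (hw2.mem_iff x).mpr ((hv2.mem_iff x).mp hx)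
    have haloc : a ∈ p₁ ∨ a ∈ p₂ := by
      rcases hvor with rfl | rfl
      · exact mem_append.mp hav
      · exact (mem_append.mp hav).symm
    have hbloc : b ∈ p₁ ∨ b ∈ p₂ := by
      rcases hvor with rfl | rfl
      · exact mem_append.mp hbv
      · exact (mem_append.mp hbv).symm
    have hpow : k = 0 ∨ 2 ^ k % 2 = 0 := by
      cases k with
      | zero => exact Or.inl rfl
      | succ m => right; rw [pow_succ]; omega
    have hab : a ≠ b := by
      intro e; rw [e] at hadj; omega
    rcases haloc with ha1 | ha2
    · rcases hbloc with hb1 | hb2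
      · -- both in p₁ : recurse
        have hk1 : 2 ^ k % 2 = 0 := by
          rcases hpow with h0 | h
          · exfalso
            have r1 := (hv1.mem_iff a).mp ha1
            have r2 := (hv1.mem_iff b).mp hb1
            rw [h0] at r1 r2; norm_num at r1 r2; omega
          · exact h
        have e1 := vidx1 a ha1
        have e2 := vidx1 b hb1
        have haq := q1of a ha1
        have hbq := q1of b hb1
        have f1 := widx1 a haq
        have f2 := widx1 b hbq
        obtain ⟨a₂, b₂, m1, m2, n1, n2, o1, o2, o3, o4⟩ :=
          ih o p₁ q₁ a b hv1 hw1 ha1 hb1 (by omega) (by omega) (by omega)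
        have g1 := vidx1 a₂ m1
        have g2 := vidx1 b₂ m2
        have g3 := widx1 a₂ (q1of a₂ m1)
        have g4 := widx1 b₂ (q1of b₂ m2)
        exact ⟨a₂, b₂, memv1 a₂ m1, memv1 b₂ m2, n1, n2, by omega, by omega, by omega, by omega⟩
      · -- a ∈ p₁, b ∈ p₂ : boundary
        have e1 := vidx1 a ha1
        have e2 := vidx2 b hb2
        have ba1 := bnd1 a ha1
        have bb2 := bnd2 b hb2
        have hd' : d₁ = 0 ∧ d₂ = 2^k := by rcases hd with h | h; exact h; omega
        have hk : 1 ≤ k := by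
          by_contra h
          have h0 : k = 0 := by omega
          rw [h0] at ba1
          norm_num at ba1
          omega
        have hkk : 2 ≤ 2 ^ k := by
          calc 2 = 2^1 := by norm_num
          _ ≤ 2^k := Nat.pow_le_pow_right (by norm_num) hk
        have haq := q1of a ha1
        have hbq := q2of b hb2
        have f1 := widx1 a haq
        have f2 := widx2 b hbq
        have wba := wbnd1 a haq
        have wbb := wbnd2 b hbq
        have hc' : c₁ = 2^k ∧ c₂ = 0 := by rcases hc with h | h; omega; exact h
        -- pick a₂ in p₁, b₂ in p₂
        set a₂ := if a = o then o + 1 else o with ha₂def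
        set b₂ := if b = o + 2^k then o + 2^k + 1 else o + 2^k with hb₂def
        have ha₂p : a₂ ∈ p₁ := by
          rw [hv1.mem_iff, ha₂def]; split <;> omega
        have hb₂p : b₂ ∈ p₂ := by
          rw [hv2.mem_iff, hb₂def]; split <;> omega
        have ha₂ne : a₂ ≠ a := by
          rw [ha₂def]; split
          · rename_i h; rw [h]; omega
          · rename_i h; exact fun e => h e.symm
        have hb₂ne : b₂ ≠ b := by
          rw [hb₂def]; split
          · rename_i h; rw [h]; omega
          · rename_i h; exact fun e => h e.symm
        have g1 := vidx1 a₂ ha₂p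
        have g2 := vidx2 b₂ hb₂p
        have g3 := widx1 a₂ (q1of a₂ ha₂p)
        have g4 := widx2 b₂ (q2of b₂ hb₂p)
        have g5 := bnd1 a₂ ha₂p
        have g6 := wbnd2 b₂ (q2of b₂ hb₂p)
        exact ⟨a₂, b₂, memv1 a₂ ha₂p, memv2 b₂ hb₂p, ha₂ne, hb₂ne,
          by omega, by omega, by omega, by omega⟩
    · rcases hbloc with hb1 | hb2
      · -- a ∈ p₂, b ∈ p₁ : boundary (rev)
        have e1 := vidx2 a ha2
        have e2 := vidx1 b hb1
        have ba1 := bnd2 a ha2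
        have bb2 := bnd1 b hb1
        have hd' : d₁ = 2^k ∧ d₂ = 0 := by rcases hd with h | h; omega; exact h
        have hk : 1 ≤ k := by
          by_contra h
          have h0 : k = 0 := by omega
          rw [h0] at ba1
          norm_num at ba1
          omega
        have hkk : 2 ≤ 2 ^ k := by
          calc 2 = 2^1 := by norm_num
          _ ≤ 2^k := Nat.pow_le_pow_right (by norm_num) hk
        have haq := q2of a ha2
        have hbq := q1of b hb1
        have f1 := widx2 a haq
        have f2 := widx1 b hbq
        have wba := wbnd2 a haq
        have wbb := wbnd1 b hbq
        have hc' : c₁ = 0 ∧ c₂ = 2^k := by rcases hc with h | h; exact h; omega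
        set a₂ := if a = o + 2^k then o + 2^k + 1 else o + 2^k with ha₂def
        set b₂ := if b = o then o + 1 else o with hb₂def
        have ha₂p : a₂ ∈ p₂ := by
          rw [hv2.mem_iff, ha₂def]; split <;> omega
        have hb₂p : b₂ ∈ p₁ := by
          rw [hv1.mem_iff, hb₂def]; split <;> omega
        have ha₂ne : a₂ ≠ a := by
          rw [ha₂def]; split
          · rename_i h; rw [h]; omega
          · rename_i h; exact fun e => h e.symm
        have hb₂ne : b₂ ≠ b := by
          rw [hb₂def]; split
          · rename_i h; rw [h]; omega
          · rename_i h; exact fun e => h e.symm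
        have g1 := vidx2 a₂ ha₂p
        have g2 := vidx1 b₂ hb₂p
        have g3 := widx2 a₂ (q2of a₂ ha₂p)
        have g4 := widx1 b₂ (q1of b₂ hb₂p)
        have g5 := bnd2 a₂ ha₂p
        have g6 := wbnd1 b₂ (q1of b₂ hb₂p)
        exact ⟨a₂, b₂, memv2 a₂ ha₂p, memv1 b₂ hb₂p, ha₂ne, hb₂ne,
          by omega, by omega, by omega, by omega⟩
      · -- both in p₂ : recurse
        have hk1 : 2 ^ k % 2 = 0 := by
          rcases hpow with h0 | h
          · exfalso
            have r1 := (hv2.mem_iff a).mp ha2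
            have r2 := (hv2.mem_iff b).mp hb2
            rw [h0] at r1 r2; norm_num at r1 r2; omega
          · exact h
        have e1 := vidx2 a ha2
        have e2 := vidx2 b hb2
        have haq := q2of a ha2
        have hbq := q2of b hb2
        have f1 := widx2 a haq
        have f2 := widx2 b hbq
        obtain ⟨a₂, b₂, m1, m2, n1, n2, o1, o2, o3, o4⟩ :=
          ih (o + 2^k) p₂ q₂ a b hv2 hw2 ha2 hb2 (by omega) (by omega) (by omega)
        have g1 := vidx2 a₂ m1
        have g2 := vidx2 b₂ m2
        have g3 := widx2 a₂ (q2of a₂ m1)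
        have g4 := widx2 b₂ (q2of b₂ m2)
        exact ⟨a₂, b₂, memv2 a₂ m1, memv2 b₂ m2, n1, n2, by omega, by omega, by omega, by omega⟩

lemma indexOf_eq_getElem_iff (v : List ℕ) (hnd : v.Nodup) (c : ℕ) (hc : c ∈ v)
    (i : ℕ) (hi : i < v.length) : c = v[i] ↔ idxOf c v = i := by
  constructor
  · rintro rfl; exact Nodup.idxOf_getElem hnd i hi
  · intro e
    rw [← Nodup.idxOf_getElem hnd i hi] at e
    exact (idxOf_inj hc).mp e

lemma swapAdj_order (v : List ℕ) (hnd : v.Nodup) (i : ℕ) (hi : i + 1 < v.length) :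
    ∀ c ∈ v, ∀ d ∈ v, idxOf c v < idxOf d v →
      (c, d) ≠ (v[i]'(Nat.lt_of_succ_lt hi), v[i+1]'hi) →
      idxOf c (swapAdj v i) < idxOf d (swapAdj v i) := by
  intro c hc d hd hlt hne
  rw [indexOf_swapAdj v hnd i hi c, indexOf_swapAdj v hnd i hi d]
  have hicl := idxOf_lt_length_iff.mpr hc
  have hidl := idxOf_lt_length_iff.mpr hd
  simp only [indexOf_eq_getElem_iff v hnd c hc i (Nat.lt_of_succ_lt hi),
    indexOf_eq_getElem_iff v hnd c hc (i+1) hi,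
    indexOf_eq_getElem_iff v hnd d hd i (Nat.lt_of_succ_lt hi),
    indexOf_eq_getElem_iff v hnd d hd (i+1) hi]
  have hne2 : ¬ (idxOf c v = i ∧ idxOf d v = i + 1) := by
    rintro ⟨e1, e2⟩
    exact hne (by
      rw [(indexOf_eq_getElem_iff v hnd c hc i (Nat.lt_of_succ_lt hi)).mpr e1,
        (indexOf_eq_getElem_iff v hnd d hd (i+1) hi).mpr e2])
  split_ifs <;> omega

theorem stmt10 (k : ℕ) (hk : 1 ≤ k) (v : List ℕ) (hv : IsBal k 0 v) :
    -- v has exactly m - 1 = 2^k - 1 adjacent-transposition neighbors …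
    Nat.card {u : List ℕ // u.Perm v ∧ listSwapDist v u = 1} = 2 ^ k - 1 ∧
    -- … of which m/2 lie in the domain …
    Nat.card {u : List ℕ // u.Perm v ∧ listSwapDist v u = 1 ∧ IsBal k 0 u}
      = 2 ^ (k - 1) ∧
    -- … and exactly 2^{k-1} - 1 = m/2 - 1 lie outside the domain and have v as
    -- their unique nearest member of the domain (distance > 1 to all others).
    Nat.card {u : List ℕ // u.Perm v ∧ listSwapDist v u = 1 ∧ ¬ IsBal k 0 u ∧
        ∀ w : List ℕ, IsBal k 0 w → w ≠ v → 2 ≤ listSwapDist w u}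
      = 2 ^ (k - 1) - 1 := by
  have hnd : v.Nodup := hv.nodup
  have hlen : v.length = 2 ^ k := hv.length
  obtain ⟨m, rfl⟩ : ∃ m, k = m + 1 := ⟨k - 1, by omega⟩
  have hhalf : 2 ^ (m + 1) = 2 * 2 ^ m := by rw [pow_succ]; ring
  have h1m : 1 ≤ 2 ^ m := Nat.one_le_two_pow
  have h2k : 2 ≤ 2 ^ (m + 1) := by omega
  have hmm : (m + 1) - 1 = m := by omega
  rw [hmm]
  have idxg : ∀ i (h : i < v.length), idxOf (v[i]'h) v = i :=
    fun i h => Nodup.idxOf_getElem hnd i h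
  have injH : ∀ i j, i < j → i + 1 < v.length → j + 1 < v.length →
      swapAdj v i ≠ swapAdj v j := by
    intro i j hij hi hj e
    have h1 : idxOf (v[i]'(Nat.lt_of_succ_lt hi)) (swapAdj v i) = i + 1 := by
      rw [indexOf_swapAdj v hnd i hi, if_pos rfl]
    have h2 : idxOf (v[i]'(Nat.lt_of_succ_lt hi)) (swapAdj v j) = i := by
      rw [indexOf_swapAdj v hnd j hj,
        if_neg (by simp only [ne_eq, hnd.getElem_inj_iff]; omega),
        if_neg (by simp only [ne_eq, hnd.getElem_inj_iff]; omega), idxg i (Nat.lt_of_succ_lt hi)]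
    rw [e, h2] at h1
    omega
  have inj : ∀ i j, i + 1 < v.length → j + 1 < v.length →
      swapAdj v i = swapAdj v j → i = j := by
    intro i j hi hj e
    rcases lt_trichotomy i j with h | h | h
    · exact absurd e (injH i j h hi hj)
    · exact h
    · exact absurd e.symm (injH j i h hj hi)
  have wperm : ∀ w, IsBal (m+1) 0 w → w.Perm v :=
    fun w hw => hw.perm_range'.trans hv.perm_range'.symm
  have wmem : ∀ w, IsBal (m+1) 0 w → ∀ x, x ∈ v → x ∈ w := by
    intro w hw x hx
    exact (hw.mem_iff x).mpr ((hv.mem_iff x).mp hx)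
  have notbal : ∀ i, i + 1 < 2 ^ (m+1) → i % 2 = 1 → ¬ IsBal (m+1) 0 (swapAdj v i) := by
    intro i hi hioo hbal
    have hi2 : i + 1 < v.length := by omega
    have hii : i < v.length := Nat.lt_of_succ_lt hi2
    have hab : v[i]'hii ≠ v[i+1]'hi2 := by rw [Ne, hnd.getElem_inj_iff]; omega
    have idxb : idxOf (v[i+1]'hi2) (swapAdj v i) = i := by
      rw [indexOf_swapAdj v hnd i hi2, if_neg (Ne.symm hab), if_pos rfl]
    have idxa : idxOf (v[i]'hii) (swapAdj v i) = i + 1 := by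
      rw [indexOf_swapAdj v hnd i hi2, if_pos rfl]
    obtain ⟨a₂, b₂, m1, m2, n1, n2, o1, o2, o3, o4⟩ :=
      crossing (m+1) 0 v (swapAdj v i) (v[i]'hii) (v[i+1]'hi2) hv hbal
        (getElem_mem hii) (getElem_mem hi2)
        (by rw [idxg i hii, idxg (i+1) hi2])
        (by rw [idxg i hii]; exact hioo)
        (by rw [idxb, idxa]; omega)
    rw [idxg (i+1) hi2] at o1
    rw [idxb] at o2
    have ha₂b : a₂ ≠ v[i+1]'hi2 := by
      intro e
      rw [e, idxg (i+1) hi2] at o1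
      omega
    have idxa₂ : idxOf a₂ (swapAdj v i) = idxOf a₂ v := by
      rw [indexOf_swapAdj v hnd i hi2, if_neg n1, if_neg ha₂b]
    rw [idxa₂] at o2
    have ha₂i : idxOf a₂ v ≠ i := by
      intro e
      exact n1 ((indexOf_eq_getElem_iff v hnd a₂ m1 i hii).mpr e)
    omega
  have dist2 : ∀ i, i + 1 < 2 ^ (m+1) → i % 2 = 1 →
      ∀ w, IsBal (m+1) 0 w → w ≠ v → 2 ≤ listSwapDist w (swapAdj v i) := by
    intro i hi hioo w hw hwv
    have hi2 : i + 1 < v.length := by omega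
    have hii : i < v.length := Nat.lt_of_succ_lt hi2
    set u := swapAdj v i with hu
    set a := v[i]'hii with hadef
    set b := v[i+1]'hi2 with hbdef
    have hav : a ∈ v := getElem_mem hii
    have hbv : b ∈ v := getElem_mem hi2
    have hab : a ≠ b := by
      rw [hadef, hbdef]
      simp only [ne_eq, hnd.getElem_inj_iff]
      omega
    have hiav : idxOf a v = i := idxg i hii
    have hibv : idxOf b v = i + 1 := idxg (i+1) hi2
    have idxb : idxOf b u = i := by
      rw [hu, indexOf_swapAdj v hnd i hi2, if_neg (Ne.symm hab), if_pos rfl]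
    have idxa : idxOf a u = i + 1 := by
      rw [hu, indexOf_swapAdj v hnd i hi2, if_pos rfl]
    have idxother : ∀ x, x ≠ a → x ≠ b → idxOf x u = idxOf x v := by
      intro x hx1 hx2
      rw [hu, indexOf_swapAdj v hnd i hi2, if_neg hx1, if_neg hx2]
    have haw : a ∈ w := wmem w hw a hav
    have hbw : b ∈ w := wmem w hw b hbv
    have key2 : ∀ c ∈ v, c ∈ w := wmem w hw
    unfold listSwapDist
    have hcard : 1 < ((w.toFinset ×ˢ w.toFinset).filter
        (fun p => w.idxOf p.1 < w.idxOf p.2 ∧ u.idxOf p.2 < u.idxOf p.1)).card := by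
      by_cases hinv : idxOf b w < idxOf a w
      · obtain ⟨a₂, b₂, m1, m2, n1, n2, o1, o2, o3, o4⟩ :=
          crossing (m+1) 0 v w a b hv hw hav hbv (by omega) (by omega) hinv
        have ha₂b : a₂ ≠ b := by
          intro e; rw [e] at o1; omega
        have hb₂a : b₂ ≠ a := by
          intro e; rw [e] at o3; omega
        have ha₂i : idxOf a₂ v ≠ i := by
          intro e
          exact n1 (by rw [hadef]; exact (indexOf_eq_getElem_iff v hnd a₂ m1 i hii).mpr e)
        have hb₂i : idxOf b₂ v ≠ i + 1 := by
          intro e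
          exact n2 (by rw [hbdef]; exact (indexOf_eq_getElem_iff v hnd b₂ m2 (i+1) hi2).mpr e)
        have idxa₂ : idxOf a₂ u = idxOf a₂ v := idxother a₂ n1 ha₂b
        have idxb₂ : idxOf b₂ u = idxOf b₂ v := idxother b₂ hb₂a n2
        refine Finset.one_lt_card.mpr ⟨(b, a₂), ?_, (b₂, a), ?_, ?_⟩
        · simp only [Finset.mem_filter, Finset.mem_product, List.mem_toFinset]
          exact ⟨⟨hbw, key2 a₂ m1⟩, o2, by rw [idxa₂, idxb]; omega⟩
        · simp only [Finset.mem_filter, Finset.mem_product, List.mem_toFinset]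
          exact ⟨⟨key2 b₂ m2, haw⟩, o4, by rw [idxb₂, idxa]; omega⟩
        · simp only [Ne, Prod.mk.injEq, not_and]
          intro _ e
          exact n1 e
      · have hex : ∃ c ∈ v, ∃ d ∈ v, idxOf c v < idxOf d v ∧
            ¬(idxOf c w < idxOf d w) := by
          by_contra hno
          push_neg at hno
          exact hwv (eq_of_sameOrder hnd (wperm w hw) hno)
        obtain ⟨c, hcv, d, hdv, hcd, hcdw⟩ := hex
        have hcd2 : c ≠ d := by intro e; rw [e] at hcd; omega
        have hdcw : idxOf d w < idxOf c w := by
          have h1 : idxOf c w ≠ idxOf d w := by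
            rw [Ne, idxOf_inj (key2 c hcv)]; exact hcd2
          omega
        have habw : idxOf a w < idxOf b w := by
          have h1 : idxOf a w ≠ idxOf b w := by
            rw [Ne, idxOf_inj haw]; exact hab
          omega
        have hpair : (c, d) ≠ (a, b) := by
          intro e
          injection e with e1 e2
          rw [e1, e2] at hcdw
          exact hcdw habw
        have hcu : idxOf c u < idxOf d u :=
          swapAdj_order v hnd i hi2 c hcv d hdv hcd hpair
        refine Finset.one_lt_card.mpr ⟨(a, b), ?_, (d, c), ?_, ?_⟩
        · simp only [Finset.mem_filter, Finset.mem_product, List.mem_toFinset]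
          exact ⟨⟨haw, hbw⟩, habw, by rw [idxa, idxb]; omega⟩
        · simp only [Finset.mem_filter, Finset.mem_product, List.mem_toFinset]
          exact ⟨⟨key2 d hdv, key2 c hcv⟩, hdcw, hcu⟩
        · simp only [Ne, Prod.mk.injEq, not_and]
          intro e1 e2
          rw [← e1, ← e2] at hcd
          omega
    omega
  have main1 : ∀ u : List ℕ, (u.Perm v ∧ listSwapDist v u = 1) ↔
      ∃ j < 2 ^ (m+1) - 1, u = swapAdj v j := by
    intro u
    constructor
    · rintro ⟨hp, hd⟩
      obtain ⟨i, hi, rfl⟩ := exists_swapAdj_of_dist_one v u hnd hp hd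
      exact ⟨i, by omega, rfl⟩
    · rintro ⟨j, hj, rfl⟩
      exact ⟨swapAdj_perm v j, listSwapDist_swapAdj v hnd j (by omega)⟩
  have main2 : ∀ u : List ℕ, (u.Perm v ∧ listSwapDist v u = 1 ∧ IsBal (m+1) 0 u) ↔
      ∃ j < 2 ^ m, u = swapAdj v (2 * j) := by
    intro u
    constructor
    · rintro ⟨hp, hd, hbal⟩
      obtain ⟨i, hi, rfl⟩ := exists_swapAdj_of_dist_one v u hnd hp hd
      have hie : i % 2 = 0 := by
        rcases Nat.mod_two_eq_zero_or_one i with h | h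
        · exact h
        · exact absurd hbal (notbal i (by omega) h)
      exact ⟨i / 2, by omega, by rw [show 2 * (i / 2) = i by omega]⟩
    · rintro ⟨j, hj, rfl⟩
      exact ⟨swapAdj_perm v _, listSwapDist_swapAdj v hnd _ (by omega),
        hv.swapAdj_even _ (by omega) (by omega)⟩
  have main3 : ∀ u : List ℕ, (u.Perm v ∧ listSwapDist v u = 1 ∧ ¬ IsBal (m+1) 0 u ∧
      ∀ w : List ℕ, IsBal (m+1) 0 w → w ≠ v → 2 ≤ listSwapDist w u) ↔
      ∃ j < 2 ^ m - 1, u = swapAdj v (2 * j + 1) := by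
    intro u
    constructor
    · rintro ⟨hp, hd, hnb, _⟩
      obtain ⟨i, hi, rfl⟩ := exists_swapAdj_of_dist_one v u hnd hp hd
      have hie : i % 2 = 1 := by
        rcases Nat.mod_two_eq_zero_or_one i with h | h
        · exact absurd (hv.swapAdj_even i h (by omega)) hnb
        · exact h
      exact ⟨i / 2, by omega, by rw [show 2 * (i / 2) + 1 = i by omega]⟩
    · rintro ⟨j, hj, rfl⟩
      refine ⟨swapAdj_perm v _, listSwapDist_swapAdj v hnd _ (by omega),
        notbal _ (by omega) (by omega), fun w hw hwv => dist2 _ (by omega) (by omega) w hw hwv⟩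
  have count : ∀ (p : List ℕ → Prop) (f : ℕ → ℕ) (N : ℕ),
      (∀ u, p u ↔ ∃ j < N, u = swapAdj v (f j)) →
      (∀ j, j < N → f j + 1 < v.length) →
      (∀ j j', j < N → j' < N → f j = f j' → j = j') →
      Nat.card {u : List ℕ // p u} = N := by
    intro p f N hiff hf hinjf
    have hset : {u : List ℕ | p u} =
        ↑((Finset.range N).image (fun j => swapAdj v (f j))) := by
      ext u
      simp only [Set.mem_setOf_eq, Finset.coe_image, Set.mem_image, Finset.mem_coe,
        Finset.mem_range, hiff]
      constructor
      · rintro ⟨j, hj, rfl⟩; exact ⟨j, hj, rfl⟩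
      · rintro ⟨j, hj, rfl⟩; exact ⟨j, hj, rfl⟩
    calc Nat.card {u : List ℕ // p u} = Nat.card {u : List ℕ | p u} := rfl
      _ = ({u : List ℕ | p u} : Set (List ℕ)).ncard := Nat.card_coe_set_eq _
      _ = N := by
        rw [hset, Set.ncard_coe_finset, Finset.card_image_of_injOn, Finset.card_range]
        intro j hj j' hj' e
        simp only [Finset.mem_coe, Finset.mem_range] at hj hj'
        exact hinjf j j' hj hj' (inj (f j) (f j') (hf j hj) (hf j' hj') e)
  refine ⟨count _ (fun j => j) (2 ^ (m+1) - 1) main1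
      (fun j hj => show j + 1 < v.length by omega)
      (fun j j' _ _ e => e),
    count _ (fun j => 2 * j) (2 ^ m) main2
      (fun j hj => show 2 * j + 1 < v.length by omega)
      (fun j j' _ _ e => by have e2 : 2 * j = 2 * j' := e; omega),
    count _ (fun j => 2 * j + 1) (2 ^ m - 1) main3
      (fun j hj => show 2 * j + 1 + 1 < v.length by omega)
      (fun j j' _ _ e => by have e2 : 2 * j + 1 = 2 * j' + 1 := e; omega)⟩
end

section
/- For every domain D ⊆ L(C), ansd(D)·C(m,2) is achieved as the minimum over all D-elections E of the normalized isomorphic swap distance between the uniform election UN (one voter per ranking in L(C)) and E; i.e., min over D-elections E of d_swap(UN, E) equals (1/m!) Σ_{u∈L(C)} swap(D, u). -/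
/-- Isomorphic swap distance between elections `V` (with `n` voters) and `U` (with
`k` voters): votes are cyclically duplicated to `n·k` voters each, and we minimize
over matchings `π` of the voters and relabelings `σ` of the candidates; the result
is divided by `n·k`. Here `σ(v) = v * σ⁻¹` is the vote `v` with every candidate `c`
replaced by `σ c`. -/
noncomputable def dswap {m n k : ℕ} (hn : 0 < n) (hk : 0 < k)
    (V : Fin n → Equiv.Perm (Fin m)) (U : Fin k → Equiv.Perm (Fin m)) : ℚ :=
  (((Finset.univ : Finset (Equiv.Perm (Fin (n * k)) × Equiv.Perm (Fin m))).inf'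
      Finset.univ_nonempty
      (fun p => ∑ i : Fin (n * k),
        swapDist ((V ⟨(i : ℕ) % n, Nat.mod_lt _ hn⟩) * p.2⁻¹)
          (U ⟨((p.1 i : ℕ)) % k, Nat.mod_lt _ hk⟩)) : ℚ)) / ((n : ℚ) * k)

/-- The uniform election: one voter per ranking in `L(C)`. -/
noncomputable def UN (m : ℕ) :
    Fin (Fintype.card (Equiv.Perm (Fin m))) → Equiv.Perm (Fin m) :=
  fun j => (Fintype.equivFin (Equiv.Perm (Fin m))).symm j


lemma swapDist_comm {m : ℕ} (u v : Equiv.Perm (Fin m)) : swapDist u v = swapDist v u := by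
  unfold swapDist
  refine Finset.card_bij (fun p _ => Prod.swap p) ?_ ?_ ?_
  · simp +contextual [and_comm]
  · intro a _ b _ h; simpa [Prod.ext_iff, and_comm] using h
  · intro b hb; exact ⟨Prod.swap b, by simpa [and_comm] using hb, by simp⟩

lemma domDist_exists {m : ℕ} {D : Finset (Equiv.Perm (Fin m))} (hD : D.Nonempty)
    (u : Equiv.Perm (Fin m)) : ∃ w ∈ D, swapDist w u = domDist D u := by
  have h : ((fun w => swapDist w u) '' (D : Set (Equiv.Perm (Fin m)))).Nonempty :=
    (hD.to_set).image _
  obtain ⟨w, hw, hww⟩ := Nat.sInf_mem h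
  exact ⟨w, hw, hww⟩

lemma sum_mod {M n : ℕ} (hM : 0 < M) (f : Fin M → ℕ) :
    ∑ i : Fin (M * n), f ⟨(i : ℕ) % M, Nat.mod_lt _ hM⟩ = n * ∑ j : Fin M, f j := by
  rw [← Equiv.sum_comp ((finProdFinEquiv (m := n) (n := M)).trans (finCongr (Nat.mul_comm n M)))
      (fun i : Fin (M * n) => f ⟨(i : ℕ) % M, Nat.mod_lt _ hM⟩)]
  have h : ∀ p : Fin n × Fin M,
      f ⟨((((finProdFinEquiv (m := n) (n := M)).trans (finCongr (Nat.mul_comm n M))) p :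
          Fin (M * n)) : ℕ) % M, Nat.mod_lt _ hM⟩ = f p.2 := by
    intro p
    congr 1
    ext
    simp [finProdFinEquiv, Nat.add_mul_mod_self_left, Nat.mod_eq_of_lt p.2.isLt]
  simp only [h]
  rw [Fintype.sum_prod_type]
  simp [Finset.sum_const, mul_comm]

theorem stmt12 (m : ℕ) (hm : 1 ≤ m) (D : Finset (Equiv.Perm (Fin m)))
    (hD : D.Nonempty) :
    IsLeast
      {q : ℚ | ∃ (n : ℕ) (hn : 0 < n) (V : Fin n → Equiv.Perm (Fin m)),
        (∀ i, V i ∈ D) ∧ q = dswap Fintype.card_pos hn (UN m) V}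
      ((∑ u : Equiv.Perm (Fin m), (domDist D u : ℚ)) / (Nat.factorial m)) := by
  classical
  have hNpos : 0 < (Fintype.card (Equiv.Perm (Fin m))) := Fintype.card_pos
  have hfacQ : ((Nat.factorial m : ℕ) : ℚ) = (((Fintype.card (Equiv.Perm (Fin m))) : ℕ) : ℚ) := by
    rw [Fintype.card_perm, Fintype.card_fin]
  have key : ∀ (n : ℕ) (hn : 0 < n) (V : Fin n → Equiv.Perm (Fin m)), (∀ i, V i ∈ D) →
      ∀ p : Equiv.Perm (Fin ((Fintype.card (Equiv.Perm (Fin m))) * n)) × Equiv.Perm (Fin m),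
      n * (∑ u : Equiv.Perm (Fin m), domDist D u) ≤ ∑ i : Fin ((Fintype.card (Equiv.Perm (Fin m))) * n),
        swapDist (UN m ⟨(i : ℕ) % (Fintype.card (Equiv.Perm (Fin m))), Nat.mod_lt _ hNpos⟩ * p.2⁻¹)
          (V ⟨((p.1 i : ℕ)) % n, Nat.mod_lt _ hn⟩) := by
    intro n hn V hV p
    have h1 : ∑ i : Fin ((Fintype.card (Equiv.Perm (Fin m))) * n), domDist D (UN m ⟨(i : ℕ) % (Fintype.card (Equiv.Perm (Fin m))), Nat.mod_lt _ hNpos⟩ * p.2⁻¹)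
        = n * ∑ j : Fin (Fintype.card (Equiv.Perm (Fin m))), domDist D (UN m j * p.2⁻¹) :=
      sum_mod hNpos (fun j => domDist D (UN m j * p.2⁻¹))
    have h2 : ∑ j : Fin (Fintype.card (Equiv.Perm (Fin m))), domDist D (UN m j * p.2⁻¹) = (∑ u : Equiv.Perm (Fin m), domDist D u) :=
      (Equiv.sum_comp (Fintype.equivFin (Equiv.Perm (Fin m))).symm
          (fun u => domDist D (u * p.2⁻¹))).trans
        (Equiv.sum_comp (Equiv.mulRight p.2⁻¹) (fun u => domDist D u))
    calc n * (∑ u : Equiv.Perm (Fin m), domDist D u)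
        = ∑ i : Fin ((Fintype.card (Equiv.Perm (Fin m))) * n),
            domDist D (UN m ⟨(i : ℕ) % (Fintype.card (Equiv.Perm (Fin m))), Nat.mod_lt _ hNpos⟩ * p.2⁻¹) := by rw [h1, h2]
      _ ≤ _ := Finset.sum_le_sum
          (fun i _ => (domDist_le (hV _) _).trans_eq (swapDist_comm _ _))
  constructor
  · -- membership: the election made of closest domain rankings achieves the value
    choose cw hcwD hcw using fun u => domDist_exists hD u
    refine ⟨(Fintype.card (Equiv.Perm (Fin m))), Fintype.card_pos, fun j => cw (UN m j), fun j => hcwD _, ?_⟩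
    have hge : (Fintype.card (Equiv.Perm (Fin m))) * (∑ u : Equiv.Perm (Fin m), domDist D u) ≤ (Finset.univ :
        Finset (Equiv.Perm (Fin ((Fintype.card (Equiv.Perm (Fin m))) * (Fintype.card (Equiv.Perm (Fin m))))) × Equiv.Perm (Fin m))).inf'
        Finset.univ_nonempty
        (fun p => ∑ i : Fin ((Fintype.card (Equiv.Perm (Fin m))) * (Fintype.card (Equiv.Perm (Fin m)))),
          swapDist ((UN m ⟨(i : ℕ) % (Fintype.card (Equiv.Perm (Fin m))), Nat.mod_lt _ hNpos⟩) * p.2⁻¹)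
            (cw (UN m ⟨((p.1 i : ℕ)) % (Fintype.card (Equiv.Perm (Fin m))), Nat.mod_lt _ hNpos⟩))) :=
      Finset.le_inf' Finset.univ_nonempty _
        (fun p _ => key (Fintype.card (Equiv.Perm (Fin m))) hNpos (fun j => cw (UN m j)) (fun j => hcwD _) p)
    have hle : (Finset.univ :
        Finset (Equiv.Perm (Fin ((Fintype.card (Equiv.Perm (Fin m))) * (Fintype.card (Equiv.Perm (Fin m))))) × Equiv.Perm (Fin m))).inf'
        Finset.univ_nonempty
        (fun p => ∑ i : Fin ((Fintype.card (Equiv.Perm (Fin m))) * (Fintype.card (Equiv.Perm (Fin m)))),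
          swapDist ((UN m ⟨(i : ℕ) % (Fintype.card (Equiv.Perm (Fin m))), Nat.mod_lt _ hNpos⟩) * p.2⁻¹)
            (cw (UN m ⟨((p.1 i : ℕ)) % (Fintype.card (Equiv.Perm (Fin m))), Nat.mod_lt _ hNpos⟩))) ≤ (Fintype.card (Equiv.Perm (Fin m))) * (∑ u : Equiv.Perm (Fin m), domDist D u) := by
      refine (Finset.inf'_le _ (Finset.mem_univ
        ((1, 1) : Equiv.Perm (Fin ((Fintype.card (Equiv.Perm (Fin m))) * (Fintype.card (Equiv.Perm (Fin m))))) × Equiv.Perm (Fin m)))).trans (le_of_eq ?_)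
      have hterm : ∀ i : Fin ((Fintype.card (Equiv.Perm (Fin m))) * (Fintype.card (Equiv.Perm (Fin m)))),
          swapDist ((UN m ⟨(i : ℕ) % (Fintype.card (Equiv.Perm (Fin m))), Nat.mod_lt _ hNpos⟩) *
              (((1, 1) : Equiv.Perm (Fin ((Fintype.card (Equiv.Perm (Fin m))) * (Fintype.card (Equiv.Perm (Fin m))))) × Equiv.Perm (Fin m)).2)⁻¹)
            (cw (UN m ⟨((((1, 1) : Equiv.Perm (Fin ((Fintype.card (Equiv.Perm (Fin m))) * (Fintype.card (Equiv.Perm (Fin m))))) × Equiv.Perm (Fin m)).1 i : ℕ))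
              % (Fintype.card (Equiv.Perm (Fin m))), Nat.mod_lt _ hNpos⟩))
          = domDist D (UN m ⟨(i : ℕ) % (Fintype.card (Equiv.Perm (Fin m))), Nat.mod_lt _ hNpos⟩) := by
        intro i
        simp only [inv_one, mul_one, Equiv.Perm.coe_one, id_eq]
        exact (swapDist_comm _ _).trans (hcw _)
      refine (Finset.sum_congr rfl (fun i _ => hterm i)).trans ?_
      rw [sum_mod hNpos (fun j => domDist D (UN m j))]
      exact congrArg ((Fintype.card (Equiv.Perm (Fin m))) * ·)
        (Equiv.sum_comp (Fintype.equivFin (Equiv.Perm (Fin m))).symm (fun u => domDist D u))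
    have hinf := le_antisymm hle hge
    unfold dswap
    rw [hfacQ, div_eq_div_iff (by positivity) (by positivity)]
    have hNat : (∑ u : Equiv.Perm (Fin m), domDist D u) * ((Fintype.card (Equiv.Perm (Fin m))) * (Fintype.card (Equiv.Perm (Fin m)))) =
        ((Finset.univ : Finset (Equiv.Perm (Fin ((Fintype.card (Equiv.Perm (Fin m))) * (Fintype.card (Equiv.Perm (Fin m))))) × Equiv.Perm (Fin m))).inf'
          Finset.univ_nonempty
          (fun p => ∑ i : Fin ((Fintype.card (Equiv.Perm (Fin m))) * (Fintype.card (Equiv.Perm (Fin m)))),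
            swapDist ((UN m ⟨(i : ℕ) % (Fintype.card (Equiv.Perm (Fin m))), Nat.mod_lt _ hNpos⟩) * p.2⁻¹)
              (cw (UN m ⟨((p.1 i : ℕ)) % (Fintype.card (Equiv.Perm (Fin m))), Nat.mod_lt _ hNpos⟩)))) * (Fintype.card (Equiv.Perm (Fin m))) := by
      rw [hinf]; ring
    exact_mod_cast hNat
  · -- lower bound
    rintro q ⟨n, hn, V, hV, rfl⟩
    unfold dswap
    rw [hfacQ, div_le_div_iff₀ (by positivity) (by positivity)]
    have hNat : (∑ u : Equiv.Perm (Fin m), domDist D u) * ((Fintype.card (Equiv.Perm (Fin m))) * n) ≤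
        ((Finset.univ : Finset (Equiv.Perm (Fin ((Fintype.card (Equiv.Perm (Fin m))) * n)) × Equiv.Perm (Fin m))).inf'
          Finset.univ_nonempty
          (fun p => ∑ i : Fin ((Fintype.card (Equiv.Perm (Fin m))) * n),
            swapDist ((UN m ⟨(i : ℕ) % (Fintype.card (Equiv.Perm (Fin m))), Nat.mod_lt _ hNpos⟩) * p.2⁻¹)
              (V ⟨((p.1 i : ℕ)) % n, Nat.mod_lt _ hn⟩))) * (Fintype.card (Equiv.Perm (Fin m))) := by
      calc (∑ u : Equiv.Perm (Fin m), domDist D u) * ((Fintype.card (Equiv.Perm (Fin m))) * n) = (n * (∑ u : Equiv.Perm (Fin m), domDist D u)) * (Fintype.card (Equiv.Perm (Fin m))) := by ring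
        _ ≤ _ := Nat.mul_le_mul_right _ (Finset.le_inf' Finset.univ_nonempty _ (fun p _ => key n hn V hV p))
    exact_mod_cast hNat
end

section
/- Every ranking single-peaked on a cycle of m candidates is single-peaked with respect to one of the m paths obtained by removing a single edge of the cycle; hence the single-peaked-on-a-circle domain over m ≥ 3 candidates has exactly m·2^{m-2} rankings. -/
/-- A finset of `Fin m` is a contiguous arc of the cycle `c_0, c_1, …, c_{m-1}, c_0`. -/
def IsArc {m : ℕ} (S : Finset (Fin m)) : Prop :=
  S = ∅ ∨ ∃ (a : Fin m) (len : ℕ),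
    S = (Finset.range len).image (fun j => (⟨((a : ℕ) + j) % m, Nat.mod_lt _ a.pos⟩ : Fin m))

/-- A ranking (candidate ↦ position) is single-peaked on the circle iff each of its
top-`t` sets is a contiguous arc of the cycle. -/
def IsSPOC {m : ℕ} (v : Equiv.Perm (Fin m)) : Prop :=
  ∀ t : ℕ, IsArc (Finset.univ.filter (fun c => (v c : ℕ) < t))

/-- A ranking is single-peaked with respect to the path obtained from the cycle by
deleting the edge `{c_{s-1}, c_s}` (i.e., the path `c_s, c_{s+1}, …, c_{s-1}`,
indices mod `m`) iff each of its top-`t` sets is an interval of that path. -/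
def IsSPPath {m : ℕ} (s : Fin m) (v : Equiv.Perm (Fin m)) : Prop :=
  ∀ t : ℕ, ∃ lo hi : ℕ, hi ≤ m ∧
    Finset.univ.filter (fun c => (v c : ℕ) < t) =
      (Finset.Ico lo hi).image (fun j => (⟨((s : ℕ) + j) % m, Nat.mod_lt _ s.pos⟩ : Fin m))

set_option linter.unusedSectionVars false
set_option linter.unusedVariables false

namespace SPOCal
open Fin.NatCast Fin.CommRing
variable {m : ℕ} [NeZero m]

/-- arc of length `len` starting at `a` -/
def arc (a : Fin m) (len : ℕ) : Finset (Fin m) :=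
  (Finset.range len).image (fun j : ℕ => a + (j : Fin m))

lemma mk_mod_eq (a : Fin m) (j : ℕ) :
    (⟨((a : ℕ) + j) % m, Nat.mod_lt _ a.pos⟩ : Fin m) = a + (j : Fin m) := by
  ext
  simp [Fin.add_def, Fin.val_natCast, Nat.add_mod]

lemma natCast_inj {j k : ℕ} (hj : j < m) (hk : k < m) (h : (j : Fin m) = (k : Fin m)) :
    j = k := by
  have := congrArg Fin.val h
  rwa [Fin.val_natCast, Fin.val_natCast, Nat.mod_eq_of_lt hj, Nat.mod_eq_of_lt hk] at this

lemma mem_arc {x : Fin m} {a : Fin m} {len : ℕ} :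
    x ∈ arc a len ↔ ∃ j < len, x = a + (j : Fin m) := by
  simp [arc, eq_comm]

lemma arc_card {a : Fin m} {len : ℕ} (h : len ≤ m) : (arc a len).card = len := by
  rw [arc, Finset.card_image_of_injOn, Finset.card_range]
  intro j hj k hk he
  simp only [Finset.coe_range, Set.mem_Iio] at hj hk
  exact natCast_inj (lt_of_lt_of_le hj h) (lt_of_lt_of_le hk h) (by
    have := add_left_cancel he; exact this)

lemma arc_univ (a : Fin m) : arc a m = Finset.univ := by
  apply Finset.eq_univ_of_card
  rw [arc_card le_rfl, Fintype.card_fin]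

lemma arc_univ_of_le (a : Fin m) {len : ℕ} (h : m ≤ len) : arc a len = Finset.univ := by
  apply Finset.eq_univ_iff_forall.2
  intro x
  have hx : x ∈ arc a m := (arc_univ a).symm ▸ Finset.mem_univ x
  rcases mem_arc.1 hx with ⟨j, hj, rfl⟩
  exact mem_arc.2 ⟨j, lt_of_lt_of_le hj h, rfl⟩

lemma neg_one_eq : ((m - 1 : ℕ) : Fin m) = -1 := by
  have h1 : 1 ≤ m := Nat.one_le_iff_ne_zero.2 (NeZero.ne m)
  have : ((m - 1 : ℕ) : Fin m) + 1 = 0 := by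
    have : ((m - 1 : ℕ) : Fin m) + ((1:ℕ) : Fin m) = ((m : ℕ) : Fin m) := by
      rw [← Nat.cast_add]; congr 1; omega
    simpa [Fin.natCast_self] using this
  linear_combination this

lemma sub_one_not_mem_arc {s : Fin m} {t : ℕ} (ht : t < m) : s - 1 ∉ arc s t := by
  rw [mem_arc]
  rintro ⟨j, hj, hx⟩
  have h1 : 1 ≤ m := Nat.one_le_iff_ne_zero.2 (NeZero.ne m)
  have : ((m - 1 : ℕ) : Fin m) = (j : Fin m) := by
    rw [neg_one_eq]
    linear_combination hx
  have := natCast_inj (by omega) (by omega) this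
  omega

lemma add_len_not_mem_arc {s : Fin m} {t : ℕ} (ht : t < m) : s + (t : Fin m) ∉ arc s t := by
  rw [mem_arc]
  rintro ⟨j, hj, hx⟩
  have : (t : Fin m) = (j : Fin m) := by linear_combination hx
  have := natCast_inj ht (by omega) this
  omega

lemma arc_succ_right (s : Fin m) (t : ℕ) :
    arc s (t + 1) = insert (s + (t : Fin m)) (arc s t) := by
  simp [arc, Finset.range_add_one]

lemma arc_succ_left (s : Fin m) (t : ℕ) :
    arc (s - 1) (t + 1) = insert (s - 1) (arc s t) := by
  ext x
  rw [mem_arc, Finset.mem_insert, mem_arc]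
  constructor
  · rintro ⟨j, hj, rfl⟩
    rcases Nat.eq_zero_or_pos j with rfl | hjpos
    · left; simp
    · right
      refine ⟨j - 1, by omega, ?_⟩
      have : (j : Fin m) = ((j - 1 : ℕ) : Fin m) + 1 := by
        rw [← Nat.cast_add_one]; congr 1; omega
      rw [this]; ring
  · rintro (rfl | ⟨k, hk, rfl⟩)
    · exact ⟨0, by omega, by simp⟩
    · refine ⟨k + 1, by omega, ?_⟩
      rw [Nat.cast_add_one]; ring

/-- nested arcs -/
lemma nested_arc {a a' : Fin m} {t : ℕ} (ht : 1 ≤ t) (htm : t + 1 < m)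
    (h : arc a t ⊆ arc a' (t + 1)) : a' = a ∨ a' = a - 1 := by
  have ha : a ∈ arc a' (t+1) := h (mem_arc.2 ⟨0, by omega, by simp⟩)
  rcases mem_arc.1 ha with ⟨i, hi, hai⟩
  by_cases hi2 : 2 ≤ i
  · exfalso
    have hmem : a + ((t + 1 - i : ℕ) : Fin m) ∈ arc a' (t+1) :=
      h (mem_arc.2 ⟨t + 1 - i, by omega, rfl⟩)
    rcases mem_arc.1 hmem with ⟨k, hk, hak⟩
    have : ((i + (t + 1 - i) : ℕ) : Fin m) = (k : Fin m) := by
      push_cast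
      linear_combination hak - hai
    have := natCast_inj (by omega) (by omega) this
    omega
  · interval_cases i
    · left; rw [hai]; simp
    · right; rw [hai]; push_cast; ring


/-! ### top sets -/

def topSet (v : Equiv.Perm (Fin m)) (t : ℕ) : Finset (Fin m) :=
  Finset.univ.filter (fun c => (v c : ℕ) < t)

lemma topSet_zero (v : Equiv.Perm (Fin m)) : topSet v 0 = ∅ := by
  simp [topSet]

lemma topSet_ge (v : Equiv.Perm (Fin m)) {t : ℕ} (h : m ≤ t) : topSet v t = Finset.univ := by
  apply Finset.eq_univ_iff_forall.2
  intro c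
  simp only [topSet, Finset.mem_filter, Finset.mem_univ, true_and]
  exact lt_of_lt_of_le (v c).isLt h

lemma topSet_succ (v : Equiv.Perm (Fin m)) {t : ℕ} (ht : t < m) :
    topSet v (t + 1) = insert (v.symm ⟨t, ht⟩) (topSet v t) := by
  ext c
  simp only [topSet, Finset.mem_insert, Finset.mem_filter, Finset.mem_univ, true_and,
    Equiv.eq_symm_apply]
  rw [Nat.lt_succ_iff_lt_or_eq]
  rw [Fin.ext_iff]
  simp only [Fin.val_mk]
  constructor
  · rintro (h | h)
    · exact Or.inr h
    · exact Or.inl h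
  · rintro (h | h)
    · exact Or.inr h
    · exact Or.inl h

lemma symm_not_mem_topSet (v : Equiv.Perm (Fin m)) {t : ℕ} (ht : t < m) :
    v.symm ⟨t, ht⟩ ∉ topSet v t := by
  simp [topSet]

lemma topSet_card (v : Equiv.Perm (Fin m)) : ∀ {t : ℕ}, t ≤ m → (topSet v t).card = t := by
  intro t
  induction t with
  | zero => intro _; simp [topSet_zero]
  | succ t ih =>
    intro ht
    have htm : t < m := ht
    rw [topSet_succ v htm, Finset.card_insert_of_notMem (symm_not_mem_topSet v htm), ih (le_of_lt htm)]

lemma insert_eq_insert {S : Finset (Fin m)} {x y : Fin m} (hx : x ∉ S) (hy : y ∉ S)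
    (h : insert x S = insert y S) : x = y := by
  have : x ∈ insert y S := h ▸ Finset.mem_insert_self x S
  rcases Finset.mem_insert.1 this with h' | h'
  · exact h'
  · exact absurd h' hx

/-! ### the decoder -/

variable (bit : ℕ → Bool)

def str (a : Fin m) : ℕ → Fin m
  | 0 => a
  | (t+1) => if bit t then str a t - 1 else str a t

def wel (a : Fin m) (t : ℕ) : Fin m :=
  if bit t then str bit a t - 1 else str bit a t + (t : Fin m)

variable {bit}

lemma wel_not_mem (a : Fin m) {t : ℕ} (ht : t < m)
    (hbit : ∀ t, bit t = true → 1 ≤ t ∧ t ≤ m - 2) :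
    wel bit a t ∉ arc (str bit a t) t := by
  rw [wel]
  by_cases hb : bit t = true
  · rw [if_pos hb]
    have := hbit t hb
    exact sub_one_not_mem_arc (by omega)
  · rw [if_neg hb]
    exact add_len_not_mem_arc ht

lemma arc_str_succ (a : Fin m) (t : ℕ) :
    arc (str bit a (t+1)) (t+1) = insert (wel bit a t) (arc (str bit a t) t) := by
  rw [str, wel]
  by_cases hb : bit t = true
  · rw [if_pos hb, if_pos hb, arc_succ_left]
  · rw [if_neg hb, if_neg hb, arc_succ_right]

variable (hbit : ∀ t, bit t = true → 1 ≤ t ∧ t ≤ m - 2)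

lemma arc_str_card (a : Fin m) {t : ℕ} (ht : t ≤ m) : (arc (str bit a t) t).card = t :=
  arc_card ht

lemma arc_str_mono (a : Fin m) : ∀ {t t' : ℕ}, t ≤ t' →
    arc (str bit a t) t ⊆ arc (str bit a t') t' := by
  intro t t' h
  induction t' with
  | zero => have : t = 0 := by omega
            subst this; exact Finset.Subset.refl _
  | succ u ih =>
    rcases Nat.lt_or_ge t (u+1) with h' | h'
    · have := ih (by omega)
      rw [arc_str_succ]
      exact this.trans (Finset.subset_insert _ _)
    · have : t = u + 1 := by omega
      subst this; exact Finset.Subset.refl _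

include hbit in
lemma wel_injective (a : Fin m) : ∀ {t t' : ℕ}, t < m → t' < m → wel bit a t = wel bit a t' → t = t' := by
  have key : ∀ {t t' : ℕ}, t < t' → t' < m → wel bit a t ≠ wel bit a t' := by
    intro t t' h h' he
    have h1 : wel bit a t ∈ arc (str bit a (t+1)) (t+1) := by
      rw [arc_str_succ]; exact Finset.mem_insert_self _ _
    have h2 : wel bit a t ∈ arc (str bit a t') t' := arc_str_mono a (by omega) h1
    rw [he] at h2
    exact wel_not_mem a h' hbit h2
  intro t t' ht ht' he
  rcases lt_trichotomy t t' with h | h | h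
  · exact absurd he (key h ht')
  · exact h
  · exact absurd he.symm (key h ht)

noncomputable def decodePerm (a : Fin m) : Equiv.Perm (Fin m) :=
  (Equiv.ofBijective (fun t : Fin m => wel bit a (t : ℕ))
    ((Fintype.bijective_iff_injective_and_card _).2
      ⟨fun t t' h => Fin.ext (wel_injective hbit a t.isLt t'.isLt h), rfl⟩)).symm

lemma decodePerm_symm_apply (a : Fin m) (t : Fin m) :
    (decodePerm hbit a).symm t = wel bit a (t : ℕ) := by
  simp [decodePerm]

lemma topSet_decode (a : Fin m) : ∀ {t : ℕ}, t ≤ m →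
    topSet (decodePerm hbit a) t = arc (str bit a t) t := by
  intro t
  induction t with
  | zero => intro _; simp [topSet_zero, arc]
  | succ u ih =>
    intro ht
    have hu : u < m := ht
    rw [topSet_succ _ hu, arc_str_succ, ih (le_of_lt hu),
      decodePerm_symm_apply hbit a ⟨u, hu⟩]

include hbit in
lemma isSPOC_decode (a : Fin m) : IsSPOC (decodePerm hbit a) := by
  intro t
  rcases le_or_gt t m with h | h
  · right
    refine ⟨str bit a t, t, ?_⟩
    have : topSet (decodePerm hbit a) t = arc (str bit a t) t := topSet_decode hbit a h
    rw [topSet] at this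
    rw [this, arc]
    apply Finset.image_congr
    intro j _
    exact (mk_mod_eq _ j).symm
  · right
    refine ⟨str bit a m, m, ?_⟩
    have h1 : topSet (decodePerm hbit a) t = Finset.univ := topSet_ge _ (le_of_lt h)
    have h2 : arc (str bit a m) m = Finset.univ := arc_univ _
    rw [topSet] at h1
    rw [h1, ← h2, arc]
    apply Finset.image_congr
    intro j _
    exact (mk_mod_eq _ j).symm

/-! ### single-peakedness on path for decoded perms -/

def Dcount (M : ℕ) (bit : ℕ → Bool) (t : ℕ) : ℕ :=
  ((Finset.Ico t (M - 1)).filter (fun k => bit k)).card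

lemma Dcount_le (M : ℕ) (bit : ℕ → Bool) (t : ℕ) : Dcount M bit t ≤ M - 1 - t := by
  calc Dcount M bit t ≤ (Finset.Ico t (M-1)).card := Finset.card_filter_le _ _
  _ = M - 1 - t := Nat.card_Ico t (M-1)

lemma Dcount_succ {t : ℕ} (ht : t < m - 1) :
    Dcount m bit t = (if bit t then 1 else 0) + Dcount m bit (t + 1) := by
  unfold Dcount
  rw [← Finset.insert_Ico_add_one_left_eq_Ico ht, Finset.filter_insert]
  have hnot : t ∉ (Finset.Ico (t+1) (m-1)).filter (fun k => bit k) := by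
    simp
  by_cases hb : bit t = true
  · rw [if_pos hb, if_pos hb, Finset.card_insert_of_notMem hnot]
    omega
  · rw [if_neg hb, if_neg hb]
    omega

lemma str_eq (a : Fin m) : ∀ j, j ≤ m - 1 →
    str bit a (m - 1 - j) = str bit a (m - 1) + ((Dcount m bit (m - 1 - j) : ℕ) : Fin m) := by
  intro j
  induction j with
  | zero =>
    intro _
    have : Dcount m bit (m - 1 - 0) = 0 := by
      unfold Dcount; simp
    rw [this]; simp
  | succ k ih =>
    intro hk
    have ht : m - 1 - (k + 1) < m - 1 := by omega
    set t := m - 1 - (k + 1) with htdef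
    have hsucc : t + 1 = m - 1 - k := by omega
    have hD := Dcount_succ (bit := bit) ht
    have hstr : str bit a t = str bit a (t+1) + (if bit t then 1 else 0 : Fin m) := by
      rw [str]
      by_cases hb : bit t = true
      · rw [if_pos hb, if_pos hb]; ring
      · rw [if_neg hb, if_neg hb]; ring
    rw [hstr, hsucc, ih (by omega), ← hsucc, hD]
    push_cast
    by_cases hb : bit t = true
    · rw [if_pos hb]; ring
    · rw [if_neg hb]; ring

lemma arc_eq_ico_image (s : Fin m) (d t : ℕ) :
    arc (s + (d : Fin m)) t =
      (Finset.Ico d (d + t)).image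
        (fun j => (⟨((s : ℕ) + j) % m, Nat.mod_lt _ s.pos⟩ : Fin m)) := by
  ext x
  rw [mem_arc, Finset.mem_image]
  constructor
  · rintro ⟨k, hk, rfl⟩
    refine ⟨d + k, by simp; omega, ?_⟩
    rw [mk_mod_eq]
    push_cast
    ring
  · rintro ⟨j, hj, rfl⟩
    simp only [Finset.mem_Ico] at hj
    refine ⟨j - d, by omega, ?_⟩
    rw [mk_mod_eq]
    have : (j : Fin m) = (d : Fin m) + ((j - d : ℕ) : Fin m) := by
      rw [← Nat.cast_add]; congr 1; omega
    rw [this]; ring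

include hbit in
lemma sppath_decode (a : Fin m) : IsSPPath (str bit a (m - 1)) (decodePerm hbit a) := by
  intro t
  rcases le_or_gt t (m - 1) with h | h
  · refine ⟨Dcount m bit t, Dcount m bit t + t, ?_, ?_⟩
    · have := Dcount_le m bit t
      have : 1 ≤ m := Nat.one_le_iff_ne_zero.2 (NeZero.ne m)
      omega
    · have h1 : topSet (decodePerm hbit a) t = arc (str bit a t) t :=
        topSet_decode hbit a (by omega)
      have h2 : str bit a t = str bit a (m - 1) + ((Dcount m bit t : ℕ) : Fin m) := by
        have := str_eq (bit := bit) a (m - 1 - t) (by omega)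
        rwa [show m - 1 - (m - 1 - t) = t by omega] at this
      rw [topSet] at h1
      rw [h1, h2, arc_eq_ico_image]
  · refine ⟨0, m, le_rfl, ?_⟩
    have h1 : topSet (decodePerm hbit a) t = Finset.univ := topSet_ge _ (by omega)
    rw [topSet] at h1
    rw [h1]
    have h2 : arc (str bit a (m-1) + ((0:ℕ) : Fin m)) m = Finset.univ := by
      rw [Nat.cast_zero, add_zero]; exact arc_univ _
    rw [← h2, arc_eq_ico_image]
    simp

/-! ### encoder -/

lemma add_cast_not_mem_arc {s : Fin m} {k t : ℕ} (hk : t ≤ k) (hkm : k < m) :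
    s + (k : Fin m) ∉ arc s t := by
  rw [mem_arc]
  rintro ⟨j, hj, hx⟩
  have : (k : Fin m) = (j : Fin m) := by linear_combination hx
  have := natCast_inj hkm (by omega) this
  omega

lemma arc_eq_image (a : Fin m) (len : ℕ) :
    (Finset.range len).image
      (fun j => (⟨((a : ℕ) + j) % m, Nat.mod_lt _ a.pos⟩ : Fin m)) = arc a len := by
  apply Finset.image_congr
  intro j _
  exact mk_mod_eq a j

lemma topSet_mono (v : Equiv.Perm (Fin m)) {t t' : ℕ} (h : t ≤ t') :
    topSet v t ⊆ topSet v t' := by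
  intro c
  simp only [topSet, Finset.mem_filter, Finset.mem_univ, true_and]
  omega

lemma exists_arc_rep {v : Equiv.Perm (Fin m)} (hv : IsSPOC v) {t : ℕ} (ht1 : 1 ≤ t)
    (htm : t < m) : ∃ a', topSet v t = arc a' t := by
  have h' : IsArc (topSet v t) := hv t
  have hcard : (topSet v t).card = t := topSet_card v (by omega)
  rcases h' with h | ⟨a', len, h⟩
  · rw [h] at hcard
    simp at hcard
    omega
  · rw [arc_eq_image] at h
    rcases le_or_gt len m with hl | hl
    · have : (topSet v t).card = len := by rw [h]; exact arc_card hl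
      have : len = t := by omega
      subst this
      exact ⟨a', h⟩
    · exfalso
      have h2 : arc a' len = Finset.univ := arc_univ_of_le a' (le_of_lt hl)
      rw [h2] at h
      have : (topSet v t).card = m := by rw [h]; simp
      omega

def bitf (M : ℕ) (b : Fin (M - 2) → Bool) : ℕ → Bool :=
  fun t => if h : 1 ≤ t ∧ t ≤ M - 2 then b ⟨t - 1, by omega⟩ else false

lemma bitf_valid (M : ℕ) (b : Fin (M - 2) → Bool) :
    ∀ t, bitf M b t = true → 1 ≤ t ∧ t ≤ M - 2 := by
  intro t h
  unfold bitf at h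
  by_cases hc : 1 ≤ t ∧ t ≤ M - 2
  · exact hc
  · rw [dif_neg hc] at h; exact absurd h (by simp)

def enc2 (v : Equiv.Perm (Fin m)) : Fin (m - 2) → Bool :=
  fun i => decide (v.symm ⟨(i : ℕ) + 1, by have := i.isLt; omega⟩ + 1 ∈ topSet v ((i : ℕ) + 1))

lemma bitf_enc2 (v : Equiv.Perm (Fin m)) {u : ℕ} (hu1 : 1 ≤ u) (hu2 : u ≤ m - 2)
    (hum : u < m) :
    bitf m (enc2 v) u = decide (v.symm ⟨u, hum⟩ + 1 ∈ topSet v u) := by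
  unfold bitf enc2
  rw [dif_pos ⟨hu1, hu2⟩]
  simp only [Nat.sub_add_cancel hu1]

lemma main_ind (hm : 3 ≤ m) (v : Equiv.Perm (Fin m)) (hv : IsSPOC v) :
    ∀ t, t ≤ m → topSet v t = arc (str (bitf m (enc2 v)) (v.symm 0) t) t := by
  set bit := bitf m (enc2 v) with hbitdef
  set a := v.symm 0 with hadef
  intro t
  induction t with
  | zero => intro _; simp [topSet_zero, arc]
  | succ u ih =>
    intro hu1
    have hu : u < m := hu1
    have hts := topSet_succ v hu
    rcases Nat.eq_zero_or_pos u with rfl | hupos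
    · -- u = 0
      have hb0 : bit 0 = false := by
        rw [hbitdef]; unfold bitf; rw [dif_neg (by omega)]
      rw [hts, topSet_zero, show str bit a 1 = a by simp [str, hb0]]
      ext x
      rw [mem_arc]
      simp only [Finset.mem_insert, Finset.notMem_empty, or_false]
      constructor
      · rintro rfl
        exact ⟨0, by omega, by simp [hadef, Fin.ext_iff]⟩
      · rintro ⟨j, hj, rfl⟩
        interval_cases j
        simp [hadef, Fin.ext_iff]
    · rcases eq_or_lt_of_le hu1 with heq | hlt
      · -- u + 1 = m
        rw [topSet_ge v (by omega)]
        exact (arc_univ_of_le _ (by omega)).symm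
      · -- 1 ≤ u, u + 1 < m
        obtain ⟨a', hrep⟩ := exists_arc_rep hv (t := u + 1) (by omega) hlt
        have hsub : arc (str bit a u) u ⊆ arc a' (u + 1) := by
          rw [← ih (by omega), ← hrep]
          exact topSet_mono v (by omega)
        have hins : insert (v.symm ⟨u, hu⟩) (topSet v u) = arc a' (u + 1) := by
          rw [← hts, hrep]
        rcases nested_arc hupos hlt hsub with rfl | rfl
        · -- right extension
          have hins2 : insert (v.symm ⟨u, hu⟩) (topSet v u)
              = insert (str bit a u + (u : Fin m)) (topSet v u) := by
            rw [hins, arc_succ_right]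
            congr 1
            exact (ih (by omega)).symm
          have hsymm : v.symm ⟨u, hu⟩ = str bit a u + (u : Fin m) := by
            refine insert_eq_insert (symm_not_mem_topSet v hu) ?_ hins2
            rw [ih (by omega)]
            exact add_len_not_mem_arc hu
          have hbu : bit u = false := by
            rw [hbitdef, bitf_enc2 v hupos (by omega) hu, hsymm, ih (by omega)]
            rw [decide_eq_false_iff_not]
            have : str bit a u + (u : Fin m) + 1 = str bit a u + ((u + 1 : ℕ) : Fin m) := by
              push_cast; ring
            rw [this]
            exact add_cast_not_mem_arc (by omega) hlt
          rw [hrep, str, hbu]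
          simp
        · -- left extension
          have hins2 : insert (v.symm ⟨u, hu⟩) (topSet v u)
              = insert (str bit a u - 1) (topSet v u) := by
            rw [hins, arc_succ_left]
            congr 1
            exact (ih (by omega)).symm
          have hsymm : v.symm ⟨u, hu⟩ = str bit a u - 1 := by
            refine insert_eq_insert (symm_not_mem_topSet v hu) ?_ hins2
            rw [ih (by omega)]
            exact sub_one_not_mem_arc hu
          have hbu : bit u = true := by
            rw [hbitdef, bitf_enc2 v hupos (by omega) hu, hsymm, ih (by omega)]
            rw [decide_eq_true_iff]
            rw [sub_add_cancel]
            exact mem_arc.2 ⟨0, by omega, by simp⟩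
          rw [hrep, str, hbu]
          simp

lemma symm_eq_wel (hm : 3 ≤ m) (v : Equiv.Perm (Fin m)) (hv : IsSPOC v) :
    ∀ t (ht : t < m), v.symm ⟨t, ht⟩ = wel (bitf m (enc2 v)) (v.symm 0) t := by
  intro t ht
  set bit := bitf m (enc2 v)
  set a := v.symm 0
  have h1 : topSet v (t + 1) = insert (wel bit a t) (topSet v t) := by
    rw [main_ind hm v hv (t+1) (by omega), arc_str_succ, main_ind hm v hv t (by omega)]
  have h2 : topSet v (t + 1) = insert (v.symm ⟨t, ht⟩) (topSet v t) := topSet_succ v ht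
  refine insert_eq_insert (symm_not_mem_topSet v ht) ?_ (h2.symm.trans h1)
  rw [main_ind hm v hv t (by omega)]
  exact wel_not_mem a ht (bitf_valid m (enc2 v))

lemma decode_encode (hm : 3 ≤ m) (v : Equiv.Perm (Fin m)) (hv : IsSPOC v) :
    decodePerm (bitf_valid m (enc2 v)) (v.symm 0) = v := by
  have hsymm : (decodePerm (bitf_valid m (enc2 v)) (v.symm 0)).symm = v.symm := by
    apply Equiv.ext
    intro k
    rw [decodePerm_symm_apply]
    rw [← symm_eq_wel hm v hv k.val k.isLt]
  have := congrArg Equiv.symm hsymm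
  simpa using this


lemma str_zero (a : Fin m) : str bit a 0 = a := rfl

lemma decode_symm_zero (a : Fin m) :
    (decodePerm hbit a).symm 0 = wel bit a 0 := by
  have h := decodePerm_symm_apply hbit a 0
  rwa [show ((0 : Fin m) : ℕ) = 0 by simp] at h

include hbit in
lemma encode_decode_fst (a : Fin m) : (decodePerm hbit a).symm 0 = a := by
  rw [decode_symm_zero, wel]
  have hb0 : bit 0 = false := by
    by_contra h
    have := hbit 0 (by simpa using h)
    omega
  rw [if_neg (by simp [hb0])]
  simp [str_zero]

lemma encode_decode_snd (hm : 3 ≤ m) (b : Fin (m - 2) → Bool) (a : Fin m) :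
    enc2 (decodePerm (bitf_valid m b) a) = b := by
  funext i
  have hi : (i : ℕ) < m - 2 := i.isLt
  set bit := bitf m b with hbitdef
  set u := decodePerm (bitf_valid m b) a with hudef
  unfold enc2
  have h1 : u.symm ⟨(i : ℕ) + 1, by omega⟩ = wel bit a ((i : ℕ) + 1) := by
    have := decodePerm_symm_apply (bitf_valid m b) a ⟨(i : ℕ) + 1, by omega⟩
    rwa [show ((⟨(i : ℕ) + 1, by omega⟩ : Fin m) : ℕ) = (i : ℕ) + 1 by simp] at this
  have h2 : topSet u ((i : ℕ) + 1) = arc (str bit a ((i : ℕ) + 1)) ((i : ℕ) + 1) :=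
    topSet_decode (bitf_valid m b) a (by omega)
  have hbi : bit ((i : ℕ) + 1) = b i := by
    rw [hbitdef]
    unfold bitf
    rw [dif_pos ⟨by omega, by omega⟩]
    congr 1
  rw [h1, h2, wel, hbi]
  by_cases hb : b i = true
  · rw [if_pos hb, hb]
    rw [decide_eq_true_iff, sub_add_cancel]
    exact mem_arc.2 ⟨0, by omega, by simp⟩
  · rw [if_neg hb]
    have hbf : b i = false := by simpa using hb
    rw [hbf]
    rw [decide_eq_false_iff_not]
    have : str bit a ((i:ℕ)+1) + (((i:ℕ)+1 : ℕ) : Fin m) + 1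
        = str bit a ((i:ℕ)+1) + (((i:ℕ)+2 : ℕ) : Fin m) := by
      push_cast; ring
    rw [this]
    exact add_cast_not_mem_arc (by omega) (by omega)

noncomputable def spocEquiv (hm : 3 ≤ m) :
    {v : Equiv.Perm (Fin m) // IsSPOC v} ≃ (Fin m × (Fin (m - 2) → Bool)) where
  toFun v := (v.1.symm 0, enc2 v.1)
  invFun p := ⟨decodePerm (bitf_valid m p.2) p.1, isSPOC_decode (bitf_valid m p.2) p.1⟩
  left_inv v := Subtype.ext (decode_encode hm v.1 v.2)
  right_inv p := by
    obtain ⟨a, b⟩ := p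
    refine Prod.ext ?_ ?_
    · exact encode_decode_fst (bitf_valid m b) a
    · exact encode_decode_snd hm b a

end SPOCal

theorem stmt18 (m : ℕ) (hm : 3 ≤ m) :
    (∀ v : Equiv.Perm (Fin m), IsSPOC v → ∃ s : Fin m, IsSPPath s v) ∧
    Nat.card {v : Equiv.Perm (Fin m) // IsSPOC v} = m * 2 ^ (m - 2) := by
  haveI : NeZero m := ⟨by omega⟩
  constructor
  · intro v hv
    refine ⟨SPOCal.str (SPOCal.bitf m (SPOCal.enc2 v)) (v.symm 0) (m - 1), ?_⟩
    have hd := SPOCal.sppath_decode (SPOCal.bitf_valid m (SPOCal.enc2 v)) (v.symm 0)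
    rwa [SPOCal.decode_encode hm v hv] at hd
  · rw [Nat.card_congr (SPOCal.spocEquiv hm)]
    simp [Nat.card_eq_fintype_card, Fintype.card_fun]
end
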